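/- arXiv:2509.01953 — 5 statements merged into one kernel-verified Lean document; each statement's English description precedes it below -/
import Mathlib

section
/- Structural barrier under rank-order mechanism: Suppose n incumbent players each play quality distributed according to CDF F_n satisfying h_n(α^n, F_n(q)) = c(q) on its support, with rewards α^n and cost c. If a new (n+1)-st player enters and the new rewards satisfy α^{n+1}_i ≤ α^n_i for 1 ≤ i ≤ n and α^{n+1}_{n+1} = 0, then the new entrant's expected reward g_{n+1}(q) = h_{n+1}(α^{n+1}, F_n(q))-type expression satisfies g_{n+1}(q) ≤ c(q) for all q ∈ [0,1], with strict inequality whenever 0 < F_n(q) < 1. Hence the entrant cannot achieve positive expected profit at any quality level. -/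
open Finset

/-- `h_n(α,t)`: expected reward at quantile `t` facing `n-1` opponents, rewards `α` 0-indexed. -/
noncomputable def hFun (n : ℕ) (α : ℕ → ℝ) (t : ℝ) : ℝ :=
  ∑ i ∈ Finset.range n, α i * (Nat.choose (n - 1) i : ℝ) * t ^ (n - 1 - i) * (1 - t) ^ i

/-- Expected reward of a new entrant of quality-quantile `t` facing `n` incumbents,
under `(n+1)`-player rewards `β` (0-indexed): `Σ_{i=0}^{n} β_{i+1} C(n,i) t^{n-i}(1-t)^i`. -/
noncomputable def gFun (n : ℕ) (β : ℕ → ℝ) (t : ℝ) : ℝ :=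
  ∑ i ∈ Finset.range (n + 1), β i * (Nat.choose n i : ℝ) * t ^ (n - i) * (1 - t) ^ i

lemma gdecomp (m : ℕ) (β : ℕ → ℝ) (hβl : β (m+2) = 0) (t : ℝ) :
    gFun (m+2) β t = t * hFun (m+2) β t + (1-t) * hFun (m+2) (fun i => β (i+1)) t := by
  unfold gFun hFun
  simp only [show m+2-1 = m+1 from rfl]
  rw [show m+2+1 = (m+2)+1 from rfl, Finset.sum_range_succ, hβl,
      Finset.sum_range_succ' _ (m+1)]
  rw [Finset.sum_range_succ' (fun i => β i * ((m+1).choose i : ℝ) * t^(m+1-i) * (1-t)^i) (m+1)]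
  rw [Finset.sum_range_succ (fun i => β (i+1) * ((m+1).choose i : ℝ) * t^(m+1-i) * (1-t)^i) (m+1)]
  rw [hβl]
  simp only [zero_mul, mul_zero, add_zero, mul_add, Finset.mul_sum]
  have key : ∀ i ∈ Finset.range (m+1),
      β (i+1) * ((m+2).choose (i+1) : ℝ) * t^(m+2-(i+1)) * (1-t)^(i+1)
      = t * (β (i+1) * ((m+1).choose (i+1) : ℝ) * t^(m+1-(i+1)) * (1-t)^(i+1))
        + (1-t) * (β (i+1) * ((m+1).choose i : ℝ) * t^(m+1-i) * (1-t)^i) := by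
    intro i hi
    have him : i ≤ m := by simpa using Nat.lt_succ_iff.mp (Finset.mem_range.mp hi)
    have h1 : m+2-(i+1) = (m-i)+1 := by omega
    have h2 : m+1-(i+1) = m-i := by omega
    have h3 : m+1-i = (m-i)+1 := by omega
    rw [h1, h2, h3, Nat.choose_succ_succ (m+1) i]
    push_cast
    ring
  rw [Finset.sum_congr rfl key, Finset.sum_add_distrib]
  simp only [Nat.sub_zero, Nat.choose_zero_right, Nat.cast_one, pow_zero, mul_one]
  ring

/-- Termwise comparison of `hFun` given pointwise coefficient comparison. -/
lemma hFun_le (m : ℕ) (γ δ : ℕ → ℝ) (t : ℝ) (ht0 : 0 ≤ t) (ht1 : t ≤ 1)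
    (h : ∀ i < m + 2, γ i ≤ δ i) : hFun (m+2) γ t ≤ hFun (m+2) δ t := by
  unfold hFun
  apply Finset.sum_le_sum
  intro i hi
  have hc : γ i ≤ δ i := h i (Finset.mem_range.mp hi)
  have h1 : (0:ℝ) ≤ t ^ (m+2-1-i) := pow_nonneg ht0 _
  have h2 : (0:ℝ) ≤ (1-t) ^ i := pow_nonneg (by linarith) _
  have h3 : (0:ℝ) ≤ ((m+2-1).choose i : ℝ) := Nat.cast_nonneg _
  gcongr

lemma hFun_lt (m : ℕ) (γ δ : ℕ → ℝ) (t : ℝ) (ht0 : 0 < t) (ht1 : t < 1)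
    (h : ∀ i < m + 2, γ i ≤ δ i) (k : ℕ) (hk : k < m + 2) (hks : γ k < δ k) :
    hFun (m+2) γ t < hFun (m+2) δ t := by
  unfold hFun
  apply Finset.sum_lt_sum
  · intro i hi
    have hc : γ i ≤ δ i := h i (Finset.mem_range.mp hi)
    have h1 : (0:ℝ) ≤ t ^ (m+2-1-i) := pow_nonneg (le_of_lt ht0) _
    have h2 : (0:ℝ) ≤ (1-t) ^ i := pow_nonneg (by linarith) _
    have h3 : (0:ℝ) ≤ ((m+2-1).choose i : ℝ) := Nat.cast_nonneg _
    gcongr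
  · refine ⟨k, Finset.mem_range.mpr hk, ?_⟩
    have h1 : (0:ℝ) < t ^ (m+2-1-k) := pow_pos ht0 _
    have h2 : (0:ℝ) < (1-t) ^ k := pow_pos (by linarith) _
    have h3 : (0:ℝ) < ((m+2-1).choose k : ℝ) := by
      have : k ≤ m + 1 := by omega
      exact_mod_cast Nat.choose_pos (by simpa [show m+2-1 = m+1 from rfl] using this)
    set P : ℝ := ((m+2-1).choose k : ℝ) * t ^ (m+2-1-k) * (1-t) ^ k with hP
    have hPpos : 0 < P := by positivity
    calc γ k * ((m+2-1).choose k : ℝ) * t ^ (m+2-1-k) * (1-t) ^ k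
        = γ k * P := by rw [hP]; ring
      _ < δ k * P := mul_lt_mul_of_pos_right hks hPpos
      _ = δ k * ((m+2-1).choose k : ℝ) * t ^ (m+2-1-k) * (1-t) ^ k := by rw [hP]; ring

/-- Structural barrier under the rank-order mechanism: if the `n` incumbents play the
symmetric equilibrium CDF `F` (so `h_n(α, F q) = c q` on the support, `h_n(α, F q) ≤ c q`
everywhere), and the new `(n+1)`-player rewards `β` satisfy `β i ≤ α i` for `i < n` and
`β n = 0`, then the entrant's expected reward satisfies `g_{n+1}(q) ≤ c q` for all
`q ∈ [0,1]`, strictly whenever `0 < F q < 1`: the entrant cannot make a positive profit. -/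
theorem structural_barrier_rank_order
    (n : ℕ) (hn : 2 ≤ n) (α β : ℕ → ℝ) (c F : ℝ → ℝ)
    (hαmono : ∀ i j, i ≤ j → j < n → α j ≤ α i)
    (hαnonneg : ∀ i, 0 ≤ α i) (hαlast : α (n - 1) = 0) (hαpos : 0 < α 0)
    (hβ : ∀ i < n, β i ≤ α i) (hβlast : β n = 0) (hβnonneg : ∀ i, 0 ≤ β i)
    (hcmono : StrictMonoOn c (Set.Icc (0:ℝ) 1)) (hc0 : c 0 = 0) (hc1 : 1 < c 1)
    (hF : ∀ q ∈ Set.Icc (0:ℝ) 1, 0 ≤ F q ∧ F q ≤ 1)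
    (heq : ∀ q ∈ Set.Icc (0:ℝ) 1, F q < 1 → hFun n α (F q) = c q)
    (hle : ∀ q ∈ Set.Icc (0:ℝ) 1, hFun n α (F q) ≤ c q) :
    ∀ q ∈ Set.Icc (0:ℝ) 1,
      gFun n β (F q) ≤ c q ∧ (0 < F q → F q < 1 → gFun n β (F q) < c q) := by
  obtain ⟨m, rfl⟩ : ∃ m, n = m + 2 := ⟨n - 2, by omega⟩
  -- the shifted coefficients are dominated by α
  have hshift : ∀ i < m + 2, β (i+1) ≤ α i := by
    intro i hi
    by_cases h : i + 1 < m + 2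
    · exact le_trans (hβ (i+1) h) (hαmono i (i+1) (Nat.le_succ i) h)
    · have : i + 1 = m + 2 := by omega
      rw [this, hβlast]
      exact hαnonneg i
  -- there is a strict drop in α
  obtain ⟨k, hk, hkdrop⟩ : ∃ k, k + 1 < m + 2 ∧ α (k+1) < α k := by
    by_contra hcon
    push_neg at hcon
    have grow : ∀ j, j < m + 2 → α 0 ≤ α j := by
      intro j
      induction j with
      | zero => intro _; exact le_refl _
      | succ j ih => intro hj; exact le_trans (ih (by omega)) (hcon j (by omega))
    have h1 := grow (m+1) (by omega)
    rw [show m+2-1 = m+1 from rfl] at hαlast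
    rw [hαlast] at h1
    exact absurd h1 (not_le.mpr hαpos)
  have hshiftk : β (k+1) < α k :=
    lt_of_le_of_lt (hβ (k+1) hk) hkdrop
  intro q hq
  obtain ⟨ht0, ht1⟩ := hF q hq
  have hdec := gdecomp m β hβlast (F q)
  have hβle : hFun (m+2) β (F q) ≤ hFun (m+2) α (F q) :=
    hFun_le m β α (F q) ht0 ht1 hβ
  have hβ'le : hFun (m+2) (fun i => β (i+1)) (F q) ≤ hFun (m+2) α (F q) :=
    hFun_le m (fun i => β (i+1)) α (F q) ht0 ht1 hshift
  have hA : F q * hFun (m+2) β (F q) ≤ F q * hFun (m+2) α (F q) :=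
    mul_le_mul_of_nonneg_left hβle ht0
  have hB : (1 - F q) * hFun (m+2) (fun i => β (i+1)) (F q)
      ≤ (1 - F q) * hFun (m+2) α (F q) :=
    mul_le_mul_of_nonneg_left hβ'le (by linarith)
  have hgh : gFun (m+2) β (F q) ≤ hFun (m+2) α (F q) := by
    rw [hdec]; linarith
  refine ⟨le_trans hgh (hle q hq), ?_⟩
  intro hF0 hF1
  have hβ'lt : hFun (m+2) (fun i => β (i+1)) (F q) < hFun (m+2) α (F q) :=
    hFun_lt m (fun i => β (i+1)) α (F q) hF0 hF1 hshift k (by omega) hshiftk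
  have hB' : (1 - F q) * hFun (m+2) (fun i => β (i+1)) (F q)
      < (1 - F q) * hFun (m+2) α (F q) :=
    mul_lt_mul_of_pos_left hβ'lt (by linarith)
  have : gFun (m+2) β (F q) < hFun (m+2) α (F q) := by
    rw [hdec]; linarith
  calc gFun (m+2) β (F q) < hFun (m+2) α (F q) := this
    _ = c q := heq q hq hF1
end

section
/- Sufficient condition for a contributing equilibrium under the proportional mechanism: if c_j'(0) / Σ_{i=1}^n c_i'(0) < 1/(n−1) for all j (or all c_j'(0) = 0), then there exists a Nash equilibrium in which every player's quality is strictly positive. -/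
open Finset

/-- Utility under the proportional mechanism: `q_i / Σ_j q_j − c_i(q_i)`. -/
noncomputable def pmUtility {n : ℕ} (c : Fin n → ℝ → ℝ) (q : Fin n → ℝ) (i : Fin n) : ℝ :=
  q i / (∑ j, q j) - c i (q i)

namespace CEE


/-- The (within-)derivative of a differentiable convex function on `[0,1]` is continuous. -/
lemma continuousOn_derivWithin {c : ℝ → ℝ} (hconv : ConvexOn ℝ (Set.Icc (0:ℝ) 1) c)
    (hd : DifferentiableOn ℝ c (Set.Icc (0:ℝ) 1)) :
    ContinuousOn (derivWithin c (Set.Icc (0:ℝ) 1)) (Set.Icc (0:ℝ) 1) := by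
  set f := derivWithin c (Set.Icc (0:ℝ) 1) with hf
  have hmono : MonotoneOn f (Set.Icc (0:ℝ) 1) := hconv.monotoneOn_derivWithin hd
  have hder : ∀ x ∈ Set.Icc (0:ℝ) 1, HasDerivWithinAt c (f x) (Set.Icc (0:ℝ) 1) x :=
    fun x hx => (hd x hx).hasDerivWithinAt
  intro a ha
  rw [ContinuousWithinAt, tendsto_order]
  constructor
  · -- lower bounds
    intro b hb
    by_cases hex : ∃ s ∈ Set.Ico (0:ℝ) a, b < f s
    · obtain ⟨s, hs, hbs⟩ := hex
      have : Set.Ioi s ∈ nhdsWithin a (Set.Icc (0:ℝ) 1) := by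
        exact mem_nhdsWithin_of_mem_nhds (Ioi_mem_nhds hs.2)
      filter_upwards [this, self_mem_nhdsWithin] with x hx hx'
      exact lt_of_lt_of_le hbs (hmono ⟨hs.1, hs.2.le.trans ha.2⟩ hx' (le_of_lt hx))
    · push_neg at hex
      rcases eq_or_lt_of_le ha.1 with h0 | h0
      · -- a = 0
        filter_upwards [self_mem_nhdsWithin] with x hx
        exact lt_of_lt_of_le hb (hmono ha hx (h0 ▸ hx.1))
      · -- a > 0 : Darboux contradiction
        exfalso
        have hf0 : f 0 ≤ b := hex 0 ⟨le_refl 0, h0⟩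
        set m := (b + f a) / 2 with hm
        have hbm : b < m := by simp only [hm]; linarith
        have hma : m < f a := by simp only [hm]; linarith
        have hsub : Set.Icc (0:ℝ) a ⊆ Set.Icc (0:ℝ) 1 :=
          Set.Icc_subset_Icc le_rfl ha.2
        have hder' : ∀ x ∈ Set.Icc (0:ℝ) a, HasDerivWithinAt c (f x) (Set.Icc (0:ℝ) a) x :=
          fun x hx => (hder x (hsub hx)).mono hsub
        obtain ⟨x₀, hx₀, hfx₀⟩ :=
          exists_hasDerivWithinAt_eq_of_gt_of_lt (le_of_lt h0) hder'
            (lt_of_le_of_lt hf0 hbm) hma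
        exact absurd (hfx₀ ▸ hex x₀ ⟨hx₀.1.le, hx₀.2⟩) (not_le.2 hbm)
  · -- upper bounds
    intro b hb
    by_cases hex : ∃ s ∈ Set.Ioc a 1, f s < b
    · obtain ⟨s, hs, hbs⟩ := hex
      have : Set.Iio s ∈ nhdsWithin a (Set.Icc (0:ℝ) 1) :=
        mem_nhdsWithin_of_mem_nhds (Iio_mem_nhds hs.1)
      filter_upwards [this, self_mem_nhdsWithin] with x hx hx'
      exact lt_of_le_of_lt (hmono hx' ⟨ha.1.trans hs.1.le, hs.2⟩ (le_of_lt hx)) hbs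
    · push_neg at hex
      rcases eq_or_lt_of_le ha.2 with h1 | h1
      · filter_upwards [self_mem_nhdsWithin] with x hx
        exact lt_of_le_of_lt (hmono hx ha (h1 ▸ hx.2)) hb
      · exfalso
        have hf1 : b ≤ f 1 := hex 1 ⟨h1, le_refl 1⟩
        set m := (f a + b) / 2 with hm
        have hma : f a < m := by simp only [hm]; linarith
        have hmb : m < b := by simp only [hm]; linarith
        have hsub : Set.Icc a 1 ⊆ Set.Icc (0:ℝ) 1 := Set.Icc_subset_Icc ha.1 le_rfl
        have hder' : ∀ x ∈ Set.Icc a 1, HasDerivWithinAt c (f x) (Set.Icc a 1) x :=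
          fun x hx => (hder x (hsub hx)).mono hsub
        obtain ⟨x₀, hx₀, hfx₀⟩ :=
          exists_hasDerivWithinAt_eq_of_gt_of_lt ha.2 hder' hma (lt_of_lt_of_le hmb hf1)
        exact absurd (hfx₀ ▸ hex x₀ ⟨hx₀.1, hx₀.2.le⟩) (not_le.2 hmb)



/-- Candidate set for the pseudo best response at aggregate `S`. -/
def Aset (f : ℝ → ℝ) (S : ℝ) : Set ℝ :=
  {x : ℝ | x ∈ Set.Icc 0 (min S 1) ∧ 0 ≤ S - x - S ^ 2 * f x}

/-- Pseudo best response at aggregate `S`. -/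
noncomputable def Q (f : ℝ → ℝ) (S : ℝ) : ℝ := sSup (Aset f S)

variable {f : ℝ → ℝ} {S : ℝ}

lemma Aset_bddAbove : BddAbove (Aset f S) := ⟨min S 1, fun _ hx => hx.1.2⟩

lemma Icc_min_subset : Set.Icc (0:ℝ) (min S 1) ⊆ Set.Icc 0 1 :=
  Set.Icc_subset_Icc le_rfl (min_le_right _ _)

lemma Q_nonneg : 0 ≤ Q f S := by
  rcases Set.eq_empty_or_nonempty (Aset f S) with h | ⟨x, hx⟩
  · simp [Q, h, Real.sSup_empty]
  · exact hx.1.1.trans (le_csSup Aset_bddAbove hx)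

lemma Q_le (hS : 0 ≤ S) : Q f S ≤ min S 1 :=
  Real.sSup_le (fun _ hx => hx.1.2) (le_min hS zero_le_one)

lemma isCompact_Aset (hc : ContinuousOn f (Set.Icc 0 1)) : IsCompact (Aset f S) := by
  have hg : ContinuousOn (fun x => S - x - S ^ 2 * f x) (Set.Icc (0:ℝ) (min S 1)) :=
    ((continuousOn_const.sub continuousOn_id).sub
      (continuousOn_const.mul (hc.mono Icc_min_subset)))
  have hcl : IsClosed (Aset f S) :=
    hg.preimage_isClosed_of_isClosed isClosed_Icc isClosed_Ici
  exact IsCompact.of_isClosed_subset isCompact_Icc hcl fun x hx => hx.1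

lemma Q_mem (hc : ContinuousOn f (Set.Icc 0 1)) (hne : (Aset f S).Nonempty) :
    Q f S ∈ Aset f S :=
  (isCompact_Aset hc).sSup_mem hne

lemma Aset_nonempty (hS : 0 ≤ S) (h0 : 0 ≤ S - S ^ 2 * f 0) : (Aset f S).Nonempty :=
  ⟨0, ⟨le_rfl, le_min hS zero_le_one⟩, by simpa using h0⟩

/-- strict antitonicity of `x ↦ S - x - S² f x` on `[0,1]`. -/
lemma g_anti (hm : MonotoneOn f (Set.Icc 0 1)) {x y : ℝ} (hx : x ∈ Set.Icc (0:ℝ) 1)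
    (hy : y ∈ Set.Icc (0:ℝ) 1) (hxy : x < y) :
    S - y - S ^ 2 * f y < S - x - S ^ 2 * f x := by
  have h1 : f x ≤ f y := hm hx hy hxy.le
  nlinarith [sq_nonneg S]

lemma Q_mem_Icc (hS : 0 ≤ S) : Q f S ∈ Set.Icc (0:ℝ) 1 :=
  ⟨Q_nonneg, (Q_le hS).trans (min_le_right _ _)⟩

lemma g_min_neg (hS : 0 < S) (hpos : ∀ x ∈ Set.Ioc (0:ℝ) 1, 0 < f x) (h1 : 1 < f 1) :
    S - min S 1 - S ^ 2 * f (min S 1) < 0 := by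
  rcases le_total S 1 with h | h
  · rw [min_eq_left h]
    have h2 : 0 < S ^ 2 * f S := mul_pos (pow_pos hS 2) (hpos S ⟨hS, h⟩)
    linarith
  · rw [min_eq_right h]
    nlinarith

lemma Q_lt_min (hS : 0 < S) (hc : ContinuousOn f (Set.Icc 0 1))
    (hpos : ∀ x ∈ Set.Ioc (0:ℝ) 1, 0 < f x) (h1 : 1 < f 1) :
    Q f S < min S 1 := by
  have hmin : (0:ℝ) < min S 1 := lt_min hS one_pos
  rcases Set.eq_empty_or_nonempty (Aset f S) with h | hne
  · simpa [Q, h, Real.sSup_empty] using hmin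
  · refine lt_of_le_of_ne (Q_le hS.le) fun hEq => ?_
    have := (Q_mem hc hne).2
    rw [hEq] at this
    exact absurd this (not_le.2 (g_min_neg hS hpos h1))

lemma Q_root (hS : 0 < S) (hc : ContinuousOn f (Set.Icc 0 1))
    (hpos : ∀ x ∈ Set.Ioc (0:ℝ) 1, 0 < f x) (h1 : 1 < f 1)
    (hq : 0 < Q f S) : S - Q f S - S ^ 2 * f (Q f S) = 0 := by
  have hne : (Aset f S).Nonempty := by
    by_contra h
    rw [Set.not_nonempty_iff_eq_empty] at h
    rw [Q, h, Real.sSup_empty] at hq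
    exact lt_irrefl _ hq
  have hmem := Q_mem hc hne
  refine le_antisymm ?_ hmem.2
  by_contra hlt
  push_neg at hlt
  -- g (Q) > 0 ; find x slightly above Q still in Aset
  set q := Q f S with hqdef
  have hqm : q < min S 1 := Q_lt_min hS hc hpos h1
  have hqIcc : q ∈ Set.Icc (0:ℝ) 1 := Q_mem_Icc hS.le
  have hsub : Set.Ioo q (min S 1) ⊆ Set.Icc (0:ℝ) 1 := fun x hx =>
    ⟨hq.le.trans hx.1.le, hx.2.le.trans (min_le_right _ _)⟩
  have hT : Filter.Tendsto (fun x => S - x - S ^ 2 * f x)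
      (nhdsWithin q (Set.Ioo q (min S 1))) (nhds (S - q - S ^ 2 * f q)) := by
    have hgc : ContinuousWithinAt (fun x => S - x - S ^ 2 * f x) (Set.Icc (0:ℝ) 1) q :=
      ((continuousOn_const.sub continuousOn_id).sub
        (continuousOn_const.mul hc)) q hqIcc
    exact hgc.mono hsub
  have hev : ∀ᶠ x in nhdsWithin q (Set.Ioo q (min S 1)),
      0 < S - x - S ^ 2 * f x := hT.eventually (eventually_gt_nhds hlt)
  haveI : Filter.NeBot (nhdsWithin q (Set.Ioo q (min S 1))) := left_nhdsWithin_Ioo_neBot hqm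
  obtain ⟨x, hgx, hx⟩ := (hev.and eventually_mem_nhdsWithin).exists
  have hxA : x ∈ Aset f S := ⟨⟨hqIcc.1.trans hx.1.le, hx.2.le⟩, hgx.le⟩
  exact absurd (le_csSup Aset_bddAbove hxA) (not_le.2 hx.1)


lemma Q_pos (hS : 0 < S) (hc : ContinuousOn f (Set.Icc 0 1))
    (hgt : 0 < S - S ^ 2 * f 0) : 0 < Q f S := by
  have hmin : (0:ℝ) < min S 1 := lt_min hS one_pos
  have h0Icc : (0:ℝ) ∈ Set.Icc (0:ℝ) 1 := ⟨le_rfl, zero_le_one⟩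
  have hsub : Set.Ioo (0:ℝ) (min S 1) ⊆ Set.Icc (0:ℝ) 1 := fun x hx =>
    ⟨hx.1.le, hx.2.le.trans (min_le_right _ _)⟩
  have hT : Filter.Tendsto (fun x => S - x - S ^ 2 * f x)
      (nhdsWithin 0 (Set.Ioo (0:ℝ) (min S 1))) (nhds (S - 0 - S ^ 2 * f 0)) :=
    (((continuousOn_const.sub continuousOn_id).sub
      (continuousOn_const.mul hc)) 0 h0Icc).mono hsub
  have hev : ∀ᶠ x in nhdsWithin 0 (Set.Ioo (0:ℝ) (min S 1)),
      0 < S - x - S ^ 2 * f x := hT.eventually (eventually_gt_nhds (by simpa using hgt))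
  haveI : Filter.NeBot (nhdsWithin (0:ℝ) (Set.Ioo (0:ℝ) (min S 1))) :=
    left_nhdsWithin_Ioo_neBot hmin
  obtain ⟨x, hgx, hx⟩ := (hev.and eventually_mem_nhdsWithin).exists
  have hxA : x ∈ Aset f S := ⟨⟨hx.1.le, hx.2.le⟩, hgx.le⟩
  exact lt_of_lt_of_le hx.1 (le_csSup Aset_bddAbove hxA)

lemma Q_zero_imp (hS : 0 < S) (hc : ContinuousOn f (Set.Icc 0 1))
    (hq : Q f S = 0) : S - S ^ 2 * f 0 ≤ 0 := by
  by_contra h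
  push_neg at h
  exact absurd hq (ne_of_gt (Q_pos hS hc h))


lemma Q_continuousAt (hS : 0 < S) (hm : MonotoneOn f (Set.Icc 0 1))
    (hc : ContinuousOn f (Set.Icc 0 1)) (h0 : 0 ≤ f 0)
    (hpos : ∀ x ∈ Set.Ioc (0:ℝ) 1, 0 < f x) (h1 : 1 < f 1) :
    ContinuousAt (Q f) S := by
  set q := Q f S with hq
  set m := min S 1 with hmdef
  have hqm : q < m := Q_lt_min hS hc hpos h1
  have hq0 : 0 ≤ q := Q_nonneg
  have hm1 : m ≤ 1 := min_le_right _ _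
  have hmS : m ≤ S := min_le_left _ _
  have hfx : ∀ x ∈ Set.Icc (0:ℝ) 1, 0 ≤ f x ∧ f x ≤ f 1 := fun x hx =>
    ⟨h0.trans (hm ⟨le_rfl, zero_le_one⟩ hx hx.1), hm hx ⟨zero_le_one, le_rfl⟩ hx.2⟩
  set L : ℝ := 1 + (2 * S + 1) * f 1 with hL
  have hLpos : 0 < L := by
    have := (hfx 1 ⟨zero_le_one, le_rfl⟩).1
    have h2S : (0:ℝ) < 2 * S + 1 := by linarith
    nlinarith
  -- Lipschitz (in S) bound for the auxiliary function
  have key : ∀ S' x, |S' - S| ≤ 1 → x ∈ Set.Icc (0:ℝ) 1 →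
      |(S' - x - S' ^ 2 * f x) - (S - x - S ^ 2 * f x)| ≤ L * |S' - S| := by
    intro S' x hd hx
    have hfb := hfx x hx
    have e1 : (S' - x - S' ^ 2 * f x) - (S - x - S ^ 2 * f x)
        = (S' - S) - (S' - S) * (S' + S) * f x := by ring
    rw [e1]
    have h2 : |(S' - S) - (S' - S) * (S' + S) * f x|
        ≤ |S' - S| + |S' - S| * |S' + S| * f x := by
      refine (abs_sub _ _).trans ?_
      rw [abs_mul, abs_mul]
      rw [abs_of_nonneg hfb.1]
    have h3 : |S' + S| ≤ 2 * S + 1 := by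
      have : |S' + S| ≤ |S' - S| + |2 * S| := by
        have : S' + S = (S' - S) + 2 * S := by ring
        rw [this]; exact abs_add_le _ _
      rw [abs_of_nonneg (by linarith : (0:ℝ) ≤ 2 * S)] at this
      linarith
    have h4 : |S' - S| * |S' + S| * f x ≤ |S' - S| * ((2 * S + 1) * f x) := by
      rw [mul_assoc]
      exact mul_le_mul_of_nonneg_left (mul_le_mul_of_nonneg_right h3 hfb.1) (abs_nonneg _)
    have h5 : |S' - S| * ((2 * S + 1) * f x) ≤ |S' - S| * ((2 * S + 1) * f 1) := by
      refine mul_le_mul_of_nonneg_left ?_ (abs_nonneg _)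
      exact mul_le_mul_of_nonneg_left hfb.2 (by linarith)
    calc |(S' - S) - (S' - S) * (S' + S) * f x|
        ≤ |S' - S| + |S' - S| * ((2 * S + 1) * f 1) := by linarith
      _ = L * |S' - S| := by ring
  -- upper semicontinuity
  have hub : ∀ ε : ℝ, 0 < ε → ∃ δ > 0, ∀ S', |S' - S| < δ → Q f S' ≤ q + ε := by
    intro ε hε
    set x₀ := min (q + ε) ((q + m) / 2) with hx₀def
    have hqx₀ : q < x₀ := lt_min (by linarith) (by linarith)
    have hx₀m : x₀ < m := (min_le_right _ _).trans_lt (by linarith)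
    have hx₀Icc : x₀ ∈ Set.Icc (0:ℝ) 1 := ⟨hq0.trans hqx₀.le, hx₀m.le.trans hm1⟩
    have hx₀A : x₀ ∉ Aset f S := fun hmem =>
      absurd (le_csSup Aset_bddAbove hmem) (not_le.2 hqx₀)
    have hgx₀ : S - x₀ - S ^ 2 * f x₀ < 0 := by
      by_contra hcon
      push_neg at hcon
      exact hx₀A ⟨⟨hx₀Icc.1, hx₀m.le⟩, hcon⟩
    set c₀ := -(S - x₀ - S ^ 2 * f x₀) with hc₀
    have hc₀pos : 0 < c₀ := by simp only [hc₀]; linarith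
    refine ⟨min (c₀ / L) 1, lt_min (div_pos hc₀pos hLpos) one_pos, fun S' hS' => ?_⟩
    have hd1 : |S' - S| ≤ 1 := (hS'.trans_le (min_le_right _ _)).le
    have hdc : |S' - S| < c₀ / L := hS'.trans_le (min_le_left _ _)
    have hg' : S' - x₀ - S' ^ 2 * f x₀ < 0 := by
      have hk := key S' x₀ hd1 hx₀Icc
      have : L * |S' - S| < c₀ := by
        rw [← lt_div_iff₀' hLpos]
        exact hdc
      have habs := (abs_le.1 hk).2
      linarith
    have hbound : ∀ a ∈ Aset f S', a ≤ x₀ := by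
      intro a ha
      by_contra hax
      push_neg at hax
      have haIcc : a ∈ Set.Icc (0:ℝ) 1 := Icc_min_subset ha.1
      have : S' - a - S' ^ 2 * f a < S' - x₀ - S' ^ 2 * f x₀ := by
        have hfa : f x₀ ≤ f a := hm hx₀Icc haIcc hax.le
        nlinarith [sq_nonneg S']
      linarith [ha.2]
    have : Q f S' ≤ x₀ := Real.sSup_le hbound hx₀Icc.1
    exact this.trans ((min_le_left _ _).trans (le_refl _))
  -- lower semicontinuity
  have hlb : ∀ ε : ℝ, 0 < ε → ∃ δ > 0, ∀ S', |S' - S| < δ → q - ε ≤ Q f S' := by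
    intro ε hε
    rcases eq_or_lt_of_le hq0 with hq0' | hq0'
    · exact ⟨1, one_pos, fun S' _ => by
        have : (0:ℝ) ≤ Q f S' := Q_nonneg
        linarith⟩
    · have hroot : S - q - S ^ 2 * f q = 0 := Q_root hS hc hpos h1 hq0'
      set x₁ := max (q - ε) (q / 2) with hx₁def
      have hx₁pos : 0 < x₁ := lt_max_of_lt_right (by linarith)
      have hx₁q : x₁ < q := max_lt (by linarith) (by linarith)
      have hx₁Icc : x₁ ∈ Set.Icc (0:ℝ) 1 := ⟨hx₁pos.le, hx₁q.le.trans ((Q_mem_Icc hS.le).2)⟩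
      have hqIcc : q ∈ Set.Icc (0:ℝ) 1 := Q_mem_Icc hS.le
      have hc₁pos : 0 < S - x₁ - S ^ 2 * f x₁ := by
        have hf₁ : f x₁ ≤ f q := hm hx₁Icc hqIcc hx₁q.le
        nlinarith [sq_nonneg S]
      set c₁ := S - x₁ - S ^ 2 * f x₁ with hc₁
      refine ⟨min (c₁ / L) (min (m - x₁) 1),
        lt_min (div_pos hc₁pos hLpos) (lt_min (by linarith) one_pos), fun S' hS' => ?_⟩
      have hd1 : |S' - S| ≤ 1 :=
        (hS'.trans_le ((min_le_right _ _).trans (min_le_right _ _))).le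
      have hdc : |S' - S| < c₁ / L := hS'.trans_le (min_le_left _ _)
      have hdm : |S' - S| < m - x₁ := hS'.trans_le ((min_le_right _ _).trans (min_le_left _ _))
      have hg' : 0 < S' - x₁ - S' ^ 2 * f x₁ := by
        have hk := key S' x₁ hd1 hx₁Icc
        have : L * |S' - S| < c₁ := by rw [← lt_div_iff₀' hLpos]; exact hdc
        have habs := (abs_le.1 hk).1
        linarith
      have hx₁S' : x₁ ≤ min S' 1 := by
        have h1' : S - S' ≤ |S' - S| := by
          rw [abs_sub_comm]; exact le_abs_self _
        refine le_min ?_ hx₁Icc.2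
        linarith
      have hx₁A : x₁ ∈ Aset f S' := ⟨⟨hx₁pos.le, hx₁S'⟩, hg'.le⟩
      have hle : x₁ ≤ Q f S' := le_csSup (Aset_bddAbove (f := f) (S := S')) hx₁A
      have hqe : q - ε ≤ x₁ := le_max_left _ _
      linarith
  rw [Metric.continuousAt_iff]
  intro ε hε
  obtain ⟨δ₁, hδ₁, hub'⟩ := hub (ε / 2) (by linarith)
  obtain ⟨δ₂, hδ₂, hlb'⟩ := hlb (ε / 2) (by linarith)
  refine ⟨min δ₁ δ₂, lt_min hδ₁ hδ₂, fun {S'} hd => ?_⟩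
  rw [Real.dist_eq] at hd ⊢
  have h₁ := hub' S' (hd.trans_le (min_le_left _ _))
  have h₂ := hlb' S' (hd.trans_le (min_le_right _ _))
  rw [abs_lt]
  constructor <;> linarith [hq]



end CEE

set_option maxHeartbeats 1600000 in
/-- Sufficient condition for a contributing equilibrium under the proportional
mechanism: if `c_j'(0) / Σ_i c_i'(0) < 1/(n−1)` for every `j` (or all `c_j'(0) = 0`),
then there exists a Nash equilibrium in which every player's quality is strictly
positive. -/
theorem contributing_equilibrium_exists
    (n : ℕ) (hn : 2 ≤ n) (c : Fin n → ℝ → ℝ)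
    (hconv : ∀ i, ConvexOn ℝ (Set.Icc (0:ℝ) 1) (c i))
    (hmonoc : ∀ i, StrictMonoOn (c i) (Set.Icc (0:ℝ) 1))
    (hc0 : ∀ i, c i 0 = 0) (hc1 : ∀ i, 1 < c i 1)
    (hdiff : ∀ i, DifferentiableOn ℝ (c i) (Set.Icc (0:ℝ) 1))
    (hcond : (∀ j : Fin n,
        derivWithin (c j) (Set.Icc (0:ℝ) 1) 0 /
          (∑ i, derivWithin (c i) (Set.Icc (0:ℝ) 1) 0) < 1 / (n - 1 : ℝ)) ∨
      (∀ j : Fin n, derivWithin (c j) (Set.Icc (0:ℝ) 1) 0 = 0)) :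
    ∃ q : Fin n → ℝ, (∀ i, 0 < q i ∧ q i ≤ 1) ∧
      (∀ i : Fin n, ∀ d ∈ Set.Icc (0:ℝ) 1,
        pmUtility c (Function.update q i d) i ≤ pmUtility c q i) := by
  classical
  have hn2 : (2:ℝ) ≤ (n:ℝ) := by exact_mod_cast hn
  set f : Fin n → ℝ → ℝ := fun i => derivWithin (c i) (Set.Icc 0 1) with hfdef
  have hI0 : (0:ℝ) ∈ Set.Icc (0:ℝ) 1 := ⟨le_rfl, zero_le_one⟩
  have hI1 : (1:ℝ) ∈ Set.Icc (0:ℝ) 1 := ⟨zero_le_one, le_rfl⟩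
  have hfm : ∀ i, MonotoneOn (f i) (Set.Icc 0 1) := fun i =>
    (hconv i).monotoneOn_derivWithin (hdiff i)
  have hfc : ∀ i, ContinuousOn (f i) (Set.Icc 0 1) := fun i =>
    CEE.continuousOn_derivWithin (hconv i) (hdiff i)
  have hfpos : ∀ i, ∀ x ∈ Set.Ioc (0:ℝ) 1, 0 < f i x := by
    intro i x hx
    have hxI : x ∈ Set.Icc (0:ℝ) 1 := ⟨hx.1.le, hx.2⟩
    have hs := (hconv i).slope_le_derivWithin hI0 hxI hx.1 (hdiff i x hxI)
    rw [slope_def_field, hc0 i] at hs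
    have hcx : 0 < c i x := by
      have := hmonoc i hI0 hxI hx.1
      rwa [hc0 i] at this
    have hpos : 0 < (c i x - 0) / (x - 0) :=
      div_pos (by linarith) (by linarith [hx.1])
    linarith
  have hf1 : ∀ i, 1 < f i 1 := by
    intro i
    have hs := (hconv i).slope_le_derivWithin hI0 hI1 one_pos (hdiff i 1 hI1)
    rw [slope_def_field, hc0 i] at hs
    have : (c i 1 - 0) / (1 - 0) = c i 1 := by norm_num
    rw [this] at hs
    exact lt_of_lt_of_le (hc1 i) hs
  have hf0 : ∀ i, 0 ≤ f i 0 := by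
    intro i
    have hD := (hdiff i 0 hI0).hasDerivWithinAt
    rw [hasDerivWithinAt_iff_tendsto_slope, Set.Icc_diff_left] at hD
    haveI : Filter.NeBot (nhdsWithin (0:ℝ) (Set.Ioc 0 1)) :=
      (left_nhdsWithin_Ioo_neBot one_pos).mono (nhdsWithin_mono _ Set.Ioo_subset_Ioc_self)
    refine ge_of_tendsto hD ?_
    filter_upwards [eventually_mem_nhdsWithin] with x hx
    rw [slope_def_field, hc0 i]
    have hxI : x ∈ Set.Icc (0:ℝ) 1 := ⟨hx.1.le, hx.2⟩
    have hcx : 0 < c i x := by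
      have := hmonoc i hI0 hxI hx.1
      rwa [hc0 i] at this
    exact le_of_lt (div_pos (by linarith) (by linarith [hx.1]))
  -- global bound on f
  set T : ℝ := (∑ i, f i 1) + 1 with hTdef
  have hsum1 : ∀ i, f i 1 ≤ ∑ j, f j 1 := fun i =>
    Finset.single_le_sum (fun j _ => zero_le_one.trans (hf1 j).le) (Finset.mem_univ i)
  have hsum1nonneg : (0:ℝ) ≤ ∑ j, f j 1 :=
    Finset.sum_nonneg fun j _ => zero_le_one.trans (hf1 j).le
  have hTpos : 0 < T := by rw [hTdef]; linarith
  have hfT : ∀ i, ∀ x ∈ Set.Icc (0:ℝ) 1, f i x ≤ T := fun i x hx =>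
    ((hfm i hx hI1 hx.2).trans (hsum1 i)).trans (by rw [hTdef]; linarith)
  -- lower endpoint
  set S₀ : ℝ := min 1 (1 / (2 * T)) with hS₀def
  have hS₀pos : 0 < S₀ := lt_min one_pos (by positivity)
  have hS₀le1 : S₀ ≤ 1 := min_le_left _ _
  have hS₀T : S₀ * T ≤ 1 / 2 := by
    have h1 : S₀ ≤ 1 / (2 * T) := min_le_right _ _
    have h2 := mul_le_mul_of_nonneg_right h1 hTpos.le
    have h3 : 1 / (2 * T) * T = 1 / 2 := by field_simp
    linarith
  have hQS₀ : ∀ i, S₀ / 2 ≤ CEE.Q (f i) S₀ := by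
    intro i
    have hb0 := hfT i 0 hI0
    have hsq : S₀ ^ 2 * f i 0 ≤ S₀ * (1 / 2) := by
      have h1 : S₀ ^ 2 * f i 0 ≤ S₀ ^ 2 * T :=
        mul_le_mul_of_nonneg_left hb0 (sq_nonneg S₀)
      have h2 : S₀ ^ 2 * T = S₀ * (S₀ * T) := by ring
      have h3 : S₀ * (S₀ * T) ≤ S₀ * (1 / 2) :=
        mul_le_mul_of_nonneg_left hS₀T hS₀pos.le
      exact le_trans h1 (le_trans (le_of_eq h2) h3)
    have hgt : 0 < S₀ - S₀ ^ 2 * f i 0 := by nlinarith [hsq, hS₀pos]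
    have hqpos := CEE.Q_pos hS₀pos (hfc i) hgt
    have hroot := CEE.Q_root hS₀pos (hfc i) (hfpos i) (hf1 i) hqpos
    have hqI := CEE.Q_mem_Icc (f := f i) (S := S₀) hS₀pos.le
    have hbq := hfT i _ hqI
    have hsq' : S₀ ^ 2 * f i (CEE.Q (f i) S₀) ≤ S₀ * (1 / 2) := by
      have h1 : S₀ ^ 2 * f i (CEE.Q (f i) S₀) ≤ S₀ ^ 2 * T :=
        mul_le_mul_of_nonneg_left hbq (sq_nonneg S₀)
      have h3 : S₀ * (S₀ * T) ≤ S₀ * (1 / 2) :=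
        mul_le_mul_of_nonneg_left hS₀T hS₀pos.le
      exact le_trans h1 (le_trans (le_of_eq (by ring)) h3)
    linarith
  -- IVT for the aggregate
  set Fn : ℝ → ℝ := fun S => (∑ i, CEE.Q (f i) S) - S with hFndef
  have hS₀n : S₀ ≤ (n:ℝ) := hS₀le1.trans (by linarith)
  have hFcont : ContinuousOn Fn (Set.Icc S₀ (n:ℝ)) := by
    intro S hS
    have hSpos : 0 < S := lt_of_lt_of_le hS₀pos hS.1
    have hsumc : ContinuousAt (fun S => ∑ i, CEE.Q (f i) S) S := by
      have := fun i : Fin n =>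
        CEE.Q_continuousAt hSpos (hfm i) (hfc i) (hf0 i) (hfpos i) (hf1 i)
      exact tendsto_finset_sum _ fun i _ => this i
    exact ((hsumc.sub continuousAt_id).continuousWithinAt)
  have hFS₀ : 0 ≤ Fn S₀ := by
    have h1 : ∑ _i : Fin n, (S₀ / 2) ≤ ∑ i, CEE.Q (f i) S₀ :=
      Finset.sum_le_sum fun i _ => hQS₀ i
    rw [Finset.sum_const, Finset.card_univ, Fintype.card_fin, nsmul_eq_mul] at h1
    have : (2:ℝ) * S₀ ≤ (n:ℝ) * (S₀ / 2) * 2 := by nlinarith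
    simp only [hFndef]
    nlinarith
  have hFn : Fn (n:ℝ) ≤ 0 := by
    have hnn : (0:ℝ) ≤ (n:ℝ) := by linarith
    have h1 : ∑ i, CEE.Q (f i) (n:ℝ) ≤ ∑ _i : Fin n, (1:ℝ) :=
      Finset.sum_le_sum fun i _ =>
        (CEE.Q_le hnn).trans (min_le_right _ _)
    rw [Finset.sum_const, Finset.card_univ, Fintype.card_fin, nsmul_eq_mul, mul_one] at h1
    simp only [hFndef]
    linarith
  obtain ⟨S, hSmem, hFS⟩ := intermediate_value_Icc' hS₀n hFcont ⟨hFn, hFS₀⟩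
  have hSpos : 0 < S := lt_of_lt_of_le hS₀pos hSmem.1
  set q : Fin n → ℝ := fun i => CEE.Q (f i) S with hqdef
  have hsum : ∑ i, q i = S := by
    have : Fn S = 0 := hFS
    simp only [hFndef] at this
    linarith
  have hqIcc : ∀ i, q i ∈ Set.Icc (0:ℝ) 1 := fun i => CEE.Q_mem_Icc hSpos.le
  have hqlt : ∀ i, q i < min S 1 := fun i =>
    CEE.Q_lt_min hSpos (hfc i) (hfpos i) (hf1 i)
  -- positivity of all contributions
  have hqpos : ∀ i, 0 < q i := by
    by_contra hcon
    push_neg at hcon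
    obtain ⟨j₀, hj₀⟩ := hcon
    have hj₀0 : q j₀ = 0 := le_antisymm hj₀ CEE.Q_nonneg
    have hj₀ineq : S ≤ S ^ 2 * f j₀ 0 := by
      have := CEE.Q_zero_imp hSpos (hfc j₀) hj₀0
      linarith
    have hfj₀pos : 0 < f j₀ 0 := by
      by_contra hneg
      push_neg at hneg
      have : S ^ 2 * f j₀ 0 ≤ 0 := mul_nonpos_of_nonneg_of_nonpos (sq_nonneg S) hneg
      linarith
    rcases hcond with hcondL | hcondR
    swap
    · exact absurd (hcondR j₀) (ne_of_gt hfj₀pos)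
    set T₀ : ℝ := ∑ i, f i 0 with hT₀def
    have hT₀pos : 0 < T₀ :=
      lt_of_lt_of_le hfj₀pos (Finset.single_le_sum (fun j _ => hf0 j) (Finset.mem_univ j₀))
    have hstrict : ∀ j, ((n:ℝ) - 1) * f j 0 < T₀ := by
      intro j
      have h := hcondL j
      rw [div_lt_div_iff₀ hT₀pos (by linarith : (0:ℝ) < (n:ℝ) - 1)] at h
      linarith
    set C : Finset (Fin n) := Finset.univ.filter (fun i => 0 < q i) with hCdef
    have hCq : ∀ i, i ∉ C → q i = 0 := by
      intro i hi
      rw [hCdef, Finset.mem_filter] at hi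
      push_neg at hi
      exact le_antisymm (hi (Finset.mem_univ i)) CEE.Q_nonneg
    have hsumC : ∑ i ∈ C, q i = S := by
      rw [← hsum]
      exact Finset.sum_subset (Finset.subset_univ C) fun i _ hi => hCq i hi
    set k : ℕ := C.card with hkdef
    have hkn : k ≤ n := by
      have := Finset.card_le_card (Finset.subset_univ C)
      rwa [Finset.card_univ, Fintype.card_fin] at this
    have hk2 : 2 ≤ k := by
      by_contra hklt
      push_neg at hklt
      interval_cases k
      · have hC0 : C = ∅ := Finset.card_eq_zero.1 hkdef.symm
        rw [hC0, Finset.sum_empty] at hsumC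
        exact absurd hsumC.symm (ne_of_gt hSpos)
      · obtain ⟨i₀, hCi⟩ := Finset.card_eq_one.1 hkdef.symm
        rw [hCi, Finset.sum_singleton] at hsumC
        have := hqlt i₀
        rw [hsumC] at this
        exact absurd (min_le_left S 1) (not_le.2 this)
    have hA : S ^ 2 * (∑ i ∈ C, f i 0) ≤ (k:ℝ) * S - S := by
      have hterm : ∀ i ∈ C, S ^ 2 * f i 0 ≤ S - q i := by
        intro i hi
        have hqi : 0 < q i := (Finset.mem_filter.1 hi).2
        have hroot := CEE.Q_root hSpos (hfc i) (hfpos i) (hf1 i) hqi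
        have hmono : f i 0 ≤ f i (q i) := hfm i hI0 (hqIcc i) (hqIcc i).1
        have := mul_le_mul_of_nonneg_left hmono (sq_nonneg S)
        linarith
      calc S ^ 2 * ∑ i ∈ C, f i 0 = ∑ i ∈ C, S ^ 2 * f i 0 := Finset.mul_sum _ _ _
        _ ≤ ∑ i ∈ C, (S - q i) := Finset.sum_le_sum hterm
        _ = (k:ℝ) * S - S := by
            rw [Finset.sum_sub_distrib, Finset.sum_const, hsumC, nsmul_eq_mul]
    have hj₀C : j₀ ∉ C := by
      rw [hCdef, Finset.mem_filter]
      push_neg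
      intro _
      rw [hj₀0]
    have hNne : Cᶜ.Nonempty := ⟨j₀, Finset.mem_compl.2 hj₀C⟩
    have hsplit : (∑ i ∈ C, f i 0) + (∑ j ∈ Cᶜ, f j 0) = T₀ :=
      Finset.sum_add_sum_compl C _
    have hNsum : ((n:ℝ) - 1) * (∑ j ∈ Cᶜ, f j 0)
        < ((n:ℝ) - (k:ℝ)) * ((∑ i ∈ C, f i 0) + (∑ j ∈ Cᶜ, f j 0)) := by
      have h1 : ∑ j ∈ Cᶜ, ((n:ℝ) - 1) * f j 0 < ∑ _j ∈ Cᶜ, T₀ :=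
        Finset.sum_lt_sum_of_nonempty hNne fun j _ => hstrict j
      rw [← Finset.mul_sum, Finset.sum_const, nsmul_eq_mul] at h1
      have hcard : ((Cᶜ.card : ℕ) : ℝ) = (n:ℝ) - (k:ℝ) := by
        rw [Finset.card_compl, Fintype.card_fin]
        exact Nat.cast_sub hkn
      rw [hcard, ← hsplit] at h1
      exact h1
    have hlast : ((n:ℝ) - 1) * S < S ^ 2 * ((∑ i ∈ C, f i 0) + (∑ j ∈ Cᶜ, f j 0)) := by
      have h1 : ((n:ℝ) - 1) * S ≤ ((n:ℝ) - 1) * (S ^ 2 * f j₀ 0) :=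
        mul_le_mul_of_nonneg_left hj₀ineq (by linarith)
      have h3 : S ^ 2 * (((n:ℝ) - 1) * f j₀ 0) < S ^ 2 * T₀ :=
        mul_lt_mul_of_pos_left (hstrict j₀) (pow_pos hSpos 2)
      rw [← hsplit] at h3
      nlinarith
    have hk1 : (1:ℝ) ≤ (k:ℝ) - 1 := by
      have : (2:ℝ) ≤ (k:ℝ) := by exact_mod_cast hk2
      linarith
    have H1 := mul_le_mul_of_nonneg_left hA (by linarith : (0:ℝ) ≤ (n:ℝ) - 1)
    have H2 := mul_le_mul_of_nonneg_left hNsum.le (sq_nonneg S)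
    have H3 := mul_lt_mul_of_pos_left hlast (by linarith : (0:ℝ) < (k:ℝ) - 1)
    linarith [H1, H2, H3]
  -- Nash property
  refine ⟨q, fun i => ⟨hqpos i, (hqIcc i).2⟩, ?_⟩
  intro i d hd
  have hqi := hqpos i
  have hqiS : q i < S := lt_of_lt_of_le (hqlt i) (min_le_left _ _)
  have ha : 0 < S - q i := by linarith
  have hroot := CEE.Q_root hSpos (hfc i) (hfpos i) (hf1 i) hqi
  have hsum_upd : ∑ j, Function.update q i d j = d + (S - q i) := by
    rw [Finset.sum_update_of_mem (Finset.mem_univ i)]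
    have hth := Finset.sum_eq_sum_sdiff_singleton_add (Finset.mem_univ i) q
    rw [hsum] at hth
    have h2 : ∑ j ∈ Finset.univ \ {i}, q j = S - q i := by linarith
    rw [h2]
  have hdpos : 0 < d + (S - q i) := by have := hd.1; linarith
  simp only [pmUtility, Function.update_self, hsum_upd, hsum]
  have key1 : d / (d + (S - q i)) - q i / S ≤ (S - q i) * (d - q i) / S ^ 2 := by
    rw [div_sub_div _ _ (ne_of_gt hdpos) (ne_of_gt hSpos),
      div_le_div_iff₀ (mul_pos hdpos hSpos) (pow_pos hSpos 2)]
    nlinarith [mul_nonneg (mul_nonneg ha.le hSpos.le) (sq_nonneg (d - q i))]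
  have key2 : f i (q i) * (d - q i) ≤ c i d - c i (q i) := by
    rcases lt_trichotomy d (q i) with hlt | heq | hgt
    · have hs := (hconv i).slope_le_derivWithin hd (hqIcc i) hlt (hdiff i (q i) (hqIcc i))
      rw [slope_def_field] at hs
      have h2 := mul_le_mul_of_nonneg_right hs (le_of_lt (sub_pos.2 hlt))
      rw [div_mul_cancel₀ _ (ne_of_gt (sub_pos.2 hlt))] at h2
      nlinarith
    · rw [heq]; simp
    · have hs := (hconv i).derivWithin_le_slope (hqIcc i) hd hgt (hdiff i (q i) (hqIcc i))
      rw [slope_def_field] at hs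
      have h2 := mul_le_mul_of_nonneg_right hs (le_of_lt (sub_pos.2 hgt))
      rw [div_mul_cancel₀ _ (ne_of_gt (sub_pos.2 hgt))] at h2
      nlinarith
  have hfv : S ^ 2 * f i (q i) = S - q i := by linarith
  have key3 : (S - q i) * (d - q i) / S ^ 2 = f i (q i) * (d - q i) := by
    rw [← hfv]
    field_simp
  linarith [key1, key2, key3]
end

section
/- In a contributing equilibrium of the proportional mechanism facilitated by n homogeneous players with cost c̄, the total quality β* = Σ q_i^* satisfies β* < 1/c̄'(0) (when c̄'(0) > 0) and 1/β* → c̄'(0) as n → ∞. -/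
open Filter

/-- In the symmetric contributing equilibrium of the proportional mechanism with `n`
homogeneous players of cost `c̄` (the per-player quality `q* n` satisfies the
first-order condition `(n−1)q*/(n·q*)² = c̄'(q*)`), the total quality
`β* n = n·q* n` satisfies `β* n < 1/c̄'(0)` and `1/β* n → c̄'(0)` as `n → ∞`. -/
theorem homogeneous_total_quality_limit
    (cbar : ℝ → ℝ)
    (hconv : ConvexOn ℝ (Set.Icc (0:ℝ) 1) cbar)
    (hmono : StrictMonoOn cbar (Set.Icc (0:ℝ) 1))
    (hc0 : cbar 0 = 0)
    (hdiff : Differentiable ℝ cbar)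
    (hd0 : 0 < deriv cbar 0)
    (qstar : ℕ → ℝ)
    (hpos : ∀ n : ℕ, 2 ≤ n → 0 < qstar n ∧ qstar n ≤ 1)
    (hFOC : ∀ n : ℕ, 2 ≤ n →
      ((n - 1 : ℝ) * qstar n) / ((n * qstar n) ^ 2) = deriv cbar (qstar n)) :
    (∀ n : ℕ, 2 ≤ n → (n : ℝ) * qstar n < 1 / deriv cbar 0) ∧
      Tendsto (fun n : ℕ => 1 / ((n : ℝ) * qstar n)) atTop (nhds (deriv cbar 0)) := by
  have hmonoD : MonotoneOn (deriv cbar) (Set.Icc (0:ℝ) 1) :=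
    hconv.monotoneOn_deriv (fun x _ => hdiff x)
  -- basic facts per n
  have key : ∀ n : ℕ, 2 ≤ n →
      deriv cbar 0 ≤ deriv cbar (qstar n) ∧
      deriv cbar (qstar n) = ((n:ℝ) - 1) / ((n:ℝ)^2 * qstar n) := by
    intro n hn
    obtain ⟨hq0, hq1⟩ := hpos n hn
    have hmem : qstar n ∈ Set.Icc (0:ℝ) 1 := ⟨hq0.le, hq1⟩
    have h0mem : (0:ℝ) ∈ Set.Icc (0:ℝ) 1 := ⟨le_rfl, zero_le_one⟩
    refine ⟨hmonoD h0mem hmem hq0.le, ?_⟩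
    rw [← hFOC n hn]
    field_simp
  have hnpos : ∀ n : ℕ, 2 ≤ n → (0:ℝ) < n := by
    intro n hn; exact_mod_cast Nat.lt_of_lt_of_le Nat.zero_lt_two hn
  -- part 1
  have part1 : ∀ n : ℕ, 2 ≤ n → (n : ℝ) * qstar n < 1 / deriv cbar 0 := by
    intro n hn
    obtain ⟨hq0, hq1⟩ := hpos n hn
    obtain ⟨hle, heq⟩ := key n hn
    have hn0 : (0:ℝ) < n := hnpos n hn
    have hβ : (0:ℝ) < (n:ℝ) * qstar n := by positivity
    rw [lt_div_iff₀ hd0]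
    calc (n:ℝ) * qstar n * deriv cbar 0 ≤ (n:ℝ) * qstar n * deriv cbar (qstar n) :=
          mul_le_mul_of_nonneg_left hle hβ.le
      _ = ((n:ℝ) - 1) / n := by rw [heq]; field_simp
      _ < 1 := by rw [div_lt_one hn0]; linarith
  refine ⟨part1, ?_⟩
  -- q_n → 0
  have hd0' : deriv cbar 0 ≠ 0 := hd0.ne'
  have hqto : Tendsto qstar atTop (nhds 0) := by
    have h1 : Tendsto (fun n : ℕ => 1 / ((n:ℝ) * deriv cbar 0)) atTop (nhds 0) :=
      Tendsto.div_atTop tendsto_const_nhds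
        (Tendsto.atTop_mul_const hd0 tendsto_natCast_atTop_atTop)
    refine tendsto_of_tendsto_of_tendsto_of_le_of_le' tendsto_const_nhds h1 ?_ ?_
    · filter_upwards [eventually_ge_atTop 2] with n hn using (hpos n hn).1.le
    · filter_upwards [eventually_ge_atTop 2] with n hn
      have hn0 : (0:ℝ) < n := hnpos n hn
      have := part1 n hn
      rw [lt_div_iff₀ hd0] at this
      rw [le_div_iff₀ (by positivity)]
      nlinarith [(hpos n hn).1]
  -- slope limits
  have hslope : Tendsto (slope cbar 0) (nhdsWithin 0 {(0:ℝ)}ᶜ) (nhds (deriv cbar 0)) :=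
    hasDerivAt_iff_tendsto_slope.mp (hdiff 0).hasDerivAt
  have hqne : ∀ᶠ n in atTop, qstar n ∈ ({(0:ℝ)}ᶜ : Set ℝ) := by
    filter_upwards [eventually_ge_atTop 2] with n hn using (hpos n hn).1.ne'
  have hq2ne : ∀ᶠ n in atTop, 2 * qstar n ∈ ({(0:ℝ)}ᶜ : Set ℝ) := by
    filter_upwards [eventually_ge_atTop 2] with n hn
    have := (hpos n hn).1; simp; linarith
  have hs1 : Tendsto (fun n => slope cbar 0 (qstar n)) atTop (nhds (deriv cbar 0)) :=
    hslope.comp (tendsto_nhdsWithin_iff.mpr ⟨hqto, hqne⟩)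
  have h2q : Tendsto (fun n => 2 * qstar n) atTop (nhds 0) := by
    simpa using hqto.const_mul 2
  have hs2 : Tendsto (fun n => slope cbar 0 (2 * qstar n)) atTop (nhds (deriv cbar 0)) :=
    hslope.comp (tendsto_nhdsWithin_iff.mpr ⟨h2q, hq2ne⟩)
  -- eventually 2 q_n ≤ 1
  have hsmall : ∀ᶠ n in atTop, 2 * qstar n ≤ 1 := by
    have := hqto.eventually (eventually_le_nhds (show (0:ℝ) < 1/2 by norm_num))
    filter_upwards [this] with n hn; linarith
  -- squeeze deriv cbar (qstar n) → deriv cbar 0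
  have hderivto : Tendsto (fun n => deriv cbar (qstar n)) atTop (nhds (deriv cbar 0)) := by
    have hupper : Tendsto (fun n => 2 * slope cbar 0 (2 * qstar n) - slope cbar 0 (qstar n))
        atTop (nhds (deriv cbar 0)) := by
      have := ((hs2.const_mul 2).sub hs1)
      simpa [two_mul] using this
    refine tendsto_of_tendsto_of_tendsto_of_le_of_le' tendsto_const_nhds hupper ?_ ?_
    · filter_upwards [eventually_ge_atTop 2] with n hn using (key n hn).1
    · filter_upwards [eventually_ge_atTop 2, hsmall] with n hn h2
      obtain ⟨hq0, hq1⟩ := hpos n hn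
      have hmemq : qstar n ∈ Set.Icc (0:ℝ) 1 := ⟨hq0.le, hq1⟩
      have hmem2q : 2 * qstar n ∈ Set.Icc (0:ℝ) 1 := ⟨by linarith, h2⟩
      have hlt : qstar n < 2 * qstar n := by linarith
      have := hconv.deriv_le_slope hmemq hmem2q hlt (hdiff _)
      have h2eq : 2 * (cbar (2 * qstar n) / (2 * qstar n)) = cbar (2 * qstar n) / qstar n := by
        rw [mul_div_assoc']
        exact mul_div_mul_left _ _ two_ne_zero
      have hseq : slope cbar (qstar n) (2 * qstar n)
          = 2 * slope cbar 0 (2 * qstar n) - slope cbar 0 (qstar n) := by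
        simp only [slope_def_field, hc0, sub_zero]
        rw [show (2:ℝ) * qstar n - qstar n = qstar n by ring, sub_div, h2eq]
      linarith [hseq ▸ this]
  -- 1/β_n = (n/(n-1)) * deriv cbar (q n)
  have hsub : Tendsto (fun n : ℕ => (n:ℝ) - 1) atTop atTop :=
    tendsto_atTop_add_const_right _ _ tendsto_natCast_atTop_atTop
  have hinv : Tendsto (fun n : ℕ => 1 / ((n:ℝ) - 1)) atTop (nhds 0) :=
    Tendsto.div_atTop tendsto_const_nhds hsub
  have hratio : Tendsto (fun n : ℕ => (n:ℝ) / ((n:ℝ) - 1)) atTop (nhds 1) := by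
    have h : Tendsto (fun n : ℕ => 1 + 1 / ((n:ℝ) - 1)) atTop (nhds 1) := by
      simpa using (tendsto_const_nhds.add hinv)
    refine h.congr' ?_
    filter_upwards [eventually_ge_atTop 2] with n hn
    have h1 : ((n:ℝ) - 1) ≠ 0 := by
      have hn1 : (1:ℝ) < n := by exact_mod_cast Nat.lt_of_lt_of_le Nat.one_lt_two hn
      linarith
    rw [eq_div_iff h1, add_mul, one_mul, div_mul_cancel₀ _ h1]; ring
  have hfinal := hratio.mul hderivto
  rw [one_mul] at hfinal
  refine hfinal.congr' ?_
  filter_upwards [eventually_ge_atTop 2] with n hn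
  obtain ⟨hq0, _⟩ := hpos n hn
  have hn1 : (1:ℝ) < n := by exact_mod_cast Nat.lt_of_lt_of_le Nat.one_lt_two hn
  rw [(key n hn).2]
  have h1 : ((n:ℝ) - 1) ≠ 0 := by linarith
  field_simp [hq0.ne']
end

section
/- Barrier against a high-marginal-cost entrant: for a market of n homogeneous players with cost c̄ (c̄'(0) > 0) and any entrant k with c_k'(0) > c̄'(0), there exists N such that for all n ≥ N, in the equilibrium of the (n+1)-player game the entrant plays q_k^* = 0 while all homogeneous players contribute. -/
open Finset

open Filter Topology in
/-- The slope of a differentiable function vanishing at `0` tends to the derivative. -/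
lemma pm_tendsto_slope0 {c : ℝ → ℝ} (hc0 : c 0 = 0) (hd : DifferentiableAt ℝ c 0) :
    Filter.Tendsto (fun d => c d / d) (nhdsWithin (0:ℝ) (Set.Ioi 0)) (nhds (deriv c 0)) := by
  have h := hasDerivAt_iff_tendsto_slope.mp hd.hasDerivAt
  have h2 := h.mono_left (nhdsWithin_mono _ (by intro x hx; exact ne_of_gt hx))
  refine h2.congr (fun d => ?_)
  simp [slope, hc0, div_eq_inv_mul]

/-- Slopes of a convex function on `[0,1]` are monotone across ordered intervals. -/
lemma pm_slope_mono4 {c : ℝ → ℝ} (hconv : ConvexOn ℝ (Set.Icc (0:ℝ) 1) c)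
    {x y z w : ℝ} (hx : 0 ≤ x) (hxy : x < y) (hyz : y ≤ z) (hzw : z < w) (hw : w ≤ 1) :
    (c y - c x) / (y - x) ≤ (c w - c z) / (w - z) := by
  have hxI : x ∈ Set.Icc (0:ℝ) 1 := ⟨hx, by linarith⟩
  have hyI : y ∈ Set.Icc (0:ℝ) 1 := ⟨by linarith, by linarith⟩
  have hzI : z ∈ Set.Icc (0:ℝ) 1 := ⟨by linarith, by linarith⟩
  have hwI : w ∈ Set.Icc (0:ℝ) 1 := ⟨by linarith, hw⟩
  have h1 : (c y - c x) / (y - x) ≤ (c w - c x) / (w - x) :=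
    hconv.secant_mono hxI hyI hwI (by intro h; exact absurd h (by linarith))
      (by intro h; exact absurd h (by linarith)) (by linarith)
  have h2 : (c x - c w) / (x - w) ≤ (c z - c w) / (z - w) :=
    hconv.secant_mono hwI hxI hzI (by intro h; exact absurd h (by linarith))
      (by intro h; exact absurd h (by linarith)) (by linarith)
  have e1 : (c x - c w) / (x - w) = (c w - c x) / (w - x) := by
    rw [← neg_div_neg_eq]; ring_nf
  have e2 : (c z - c w) / (z - w) = (c w - c z) / (w - z) := by
    rw [← neg_div_neg_eq]; ring_nf
  rw [e1, e2] at h2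
  linarith

/-- The derivative at `0` of a convex function vanishing at `0` is below its slopes. -/
lemma pm_deriv_le_slope0 {c : ℝ → ℝ} (hconv : ConvexOn ℝ (Set.Icc (0:ℝ) 1) c)
    (hc0 : c 0 = 0) (hd : DifferentiableAt ℝ c 0) {t : ℝ} (ht : 0 < t) (ht1 : t ≤ 1) :
    deriv c 0 ≤ c t / t := by
  have htend := pm_tendsto_slope0 hc0 hd
  refine le_of_tendsto htend ?_
  filter_upwards [Ioo_mem_nhdsGT_of_mem (Set.mem_Ico.mpr ⟨le_refl 0, ht⟩)] with d hd'
  obtain ⟨hd0, hdt⟩ := hd'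
  have := hconv.secant_mono (Set.mem_Icc.mpr ⟨le_refl 0, by norm_num⟩)
    (Set.mem_Icc.mpr ⟨hd0.le, by linarith⟩) (Set.mem_Icc.mpr ⟨ht.le, ht1⟩)
    (ne_of_gt hd0) (ne_of_gt ht) (le_of_lt hdt)
  simpa [hc0] using this

open Filter Topology in
/-- A player whose best response includes staying at `0` has a high marginal cost. -/
lemma pm_P2 {c : ℝ → ℝ} (hc0 : c 0 = 0) (hd : DifferentiableAt ℝ c 0)
    {S : ℝ} (hSpos : 0 < S)
    (hbest : ∀ d ∈ Set.Ioc (0:ℝ) 1, d / (S + d) ≤ c d) :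
    1 / S ≤ deriv c 0 := by
  have h1 : Tendsto (fun d : ℝ => 1 / (S + d)) (𝓝[>] (0:ℝ)) (𝓝 (1 / S)) := by
    have hc : Tendsto (fun d : ℝ => 1 / (S + d)) (𝓝 (0:ℝ)) (𝓝 (1 / (S + 0))) := by
      apply Tendsto.div tendsto_const_nhds (tendsto_const_nhds.add tendsto_id)
      positivity
    rw [add_zero] at hc
    exact hc.mono_left nhdsWithin_le_nhds
  have h2 := pm_tendsto_slope0 hc0 hd
  refine le_of_tendsto_of_tendsto h1 h2 ?_
  filter_upwards [Ioc_mem_nhdsGT (by norm_num : (0:ℝ) < 1)] with d hd'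
  have hb := hbest d hd'
  have hd0 : 0 < d := hd'.1
  rw [div_le_div_iff₀ (by positivity) hd0]
  rw [div_le_iff₀ (by positivity)] at hb
  nlinarith

set_option maxHeartbeats 2000000 in
/-- Barrier against a high-marginal-cost entrant: if `n` homogeneous players have cost
`c̄` with `c̄'(0) > 0` and the entrant's cost `c_k` satisfies `c_k'(0) > c̄'(0)`, then
for all sufficiently large `n`, in any Nash equilibrium of the `(n+1)`-player game the
entrant plays `0` while every homogeneous player contributes strictly positive quality. -/
theorem barrier_against_high_marginal_cost_entrant
    (cbar ck : ℝ → ℝ)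
    (hconv : ConvexOn ℝ (Set.Icc (0:ℝ) 1) cbar)
    (hmono : StrictMonoOn cbar (Set.Icc (0:ℝ) 1))
    (hc0 : cbar 0 = 0) (hdiffb : Differentiable ℝ cbar)
    (hkconv : ConvexOn ℝ (Set.Icc (0:ℝ) 1) ck)
    (hkmono : StrictMonoOn ck (Set.Icc (0:ℝ) 1))
    (hk0 : ck 0 = 0) (hdiffk : Differentiable ℝ ck)
    (hd0 : 0 < deriv cbar 0)
    (hgap : deriv cbar 0 < deriv ck 0) :
    ∃ N : ℕ, ∀ n : ℕ, N ≤ n →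
      ∀ q : Fin (n + 1) → ℝ, (∀ i, q i ∈ Set.Icc (0:ℝ) 1) →
        (∀ i : Fin (n + 1), ∀ d ∈ Set.Icc (0:ℝ) 1,
          pmUtility (fun i => if i = Fin.last n then ck else cbar)
              (Function.update q i d) i ≤
            pmUtility (fun i => if i = Fin.last n then ck else cbar) q i) →
        q (Fin.last n) = 0 ∧ ∀ i : Fin n, 0 < q i.castSucc := by
  classical
  set a := deriv cbar 0 with ha_def
  set b := deriv ck 0 with hb_def
  have hb0 : 0 < b := lt_trans hd0 hgap
  -- Step 1: choose δ ∈ (0, 1/4] with slope of cbar on [δ, 2δ] below b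
  have hslope0 : Filter.Tendsto (fun d => cbar d / d) (nhdsWithin (0:ℝ) (Set.Ioi 0)) (nhds a) :=
    pm_tendsto_slope0 hc0 (hdiffb 0)
  have h2t : Filter.Tendsto (fun t : ℝ => 2 * t) (nhdsWithin (0:ℝ) (Set.Ioi 0))
      (nhdsWithin (0:ℝ) (Set.Ioi 0)) := by
    rw [tendsto_nhdsWithin_iff]
    constructor
    · have hcont : Filter.Tendsto (fun t : ℝ => 2 * t) (nhds (0:ℝ)) (nhds (0:ℝ)) := by
        have h := (continuous_const.mul continuous_id : Continuous fun t : ℝ => 2 * t).tendsto 0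
        convert h using 2 <;> simp
      exact hcont.mono_left nhdsWithin_le_nhds
    · filter_upwards [self_mem_nhdsWithin] with t ht
      exact mul_pos (by norm_num : (0:ℝ) < 2) ht
  have hLtend : Filter.Tendsto (fun t => (cbar (2 * t) - cbar t) / t)
      (nhdsWithin (0:ℝ) (Set.Ioi 0)) (nhds a) := by
    have hcomp : Filter.Tendsto (fun t : ℝ => cbar (2 * t) / (2 * t))
        (nhdsWithin (0:ℝ) (Set.Ioi 0)) (nhds a) := hslope0.comp h2t
    have hsub : Filter.Tendsto (fun t : ℝ => 2 * (cbar (2 * t) / (2 * t)) - cbar t / t)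
        (nhdsWithin (0:ℝ) (Set.Ioi 0)) (nhds (2 * a - a)) :=
      (hcomp.const_mul 2).sub hslope0
    have he : 2 * a - a = a := by ring
    rw [he] at hsub
    refine hsub.congr' ?_
    filter_upwards [self_mem_nhdsWithin] with t ht
    have ht0 : t ≠ 0 := ne_of_gt ht
    field_simp
  have hevlt : ∀ᶠ t in nhdsWithin (0:ℝ) (Set.Ioi 0), (cbar (2 * t) - cbar t) / t < b :=
    hLtend.eventually_lt_const hgap
  have hmemev : ∀ᶠ t in nhdsWithin (0:ℝ) (Set.Ioi 0), t ∈ Set.Ioc (0:ℝ) (1/4) :=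
    Filter.eventually_of_mem (Ioc_mem_nhdsGT (by norm_num)) (fun x hx => hx)
  obtain ⟨δ, hδb, hδmem⟩ := (hevlt.and hmemev).exists
  obtain ⟨hδ0, hδ14⟩ := hδmem
  set L₀ := (cbar (2 * δ) - cbar δ) / δ with hL0_def
  have hδ2 : 2 * δ ≤ 1 := by linarith
  have haL : a ≤ L₀ := by
    have hs := pm_slope_mono4 hconv (x := 0) (y := δ) (z := δ) (w := 2 * δ)
      le_rfl hδ0 le_rfl (by linarith) hδ2
    have hda : a ≤ cbar δ / δ := pm_deriv_le_slope0 hconv hc0 (hdiffb 0) hδ0 (by linarith)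
    have e1 : (cbar δ - cbar 0) / (δ - 0) = cbar δ / δ := by rw [hc0, sub_zero, sub_zero]
    have e2 : 2 * δ - δ = δ := by ring
    rw [e1, e2] at hs
    linarith
  have hL0pos : 0 < L₀ := lt_of_lt_of_le hd0 haL
  have hL0b : L₀ < b := hδb
  refine ⟨⌈(b + 2 * L₀) / (b - L₀)⌉₊ + ⌈2 / (b * δ)⌉₊ + 1, ?_⟩
  intro n hn q hq heq
  have hn1 : 1 ≤ n := by omega
  have hnR1 : (1:ℝ) ≤ n := by exact_mod_cast hn1
  have hnRpos : (0:ℝ) < n := by linarith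
  have hc1 : (b + 2 * L₀) / (b - L₀) < n := by
    have hle : ⌈(b + 2 * L₀) / (b - L₀)⌉₊ + 1 ≤ n := by omega
    have h1 : (⌈(b + 2 * L₀) / (b - L₀)⌉₊ : ℝ) + 1 ≤ n := by exact_mod_cast hle
    have := Nat.le_ceil ((b + 2 * L₀) / (b - L₀))
    linarith
  have hc2 : 2 / (b * δ) ≤ n := by
    have hle : ⌈2 / (b * δ)⌉₊ ≤ n := by omega
    have h1 : (⌈2 / (b * δ)⌉₊ : ℝ) ≤ n := by exact_mod_cast hle
    have := Nat.le_ceil (2 / (b * δ))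
    linarith
  have hnb : b + 2 * L₀ < (n:ℝ) * (b - L₀) := by
    rw [div_lt_iff₀ (by linarith : (0:ℝ) < b - L₀)] at hc1
    linarith
  -- basic setup
  obtain ⟨S, hS_def⟩ : ∃ x : ℝ, x = ∑ j, q j := ⟨_, rfl⟩
  have hq0 : ∀ i, 0 ≤ q i := fun i => (hq i).1
  have hq1 : ∀ i, q i ≤ 1 := fun i => (hq i).2
  have hqS : ∀ i, q i ≤ S := by
    intro i
    rw [hS_def]
    exact Finset.single_le_sum (fun j _ => hq0 j) (Finset.mem_univ i)
  have hpairS : ∀ i j, i ≠ j → q i + q j ≤ S := by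
    intro i j hij
    rw [hS_def]
    have hsub : ∑ p ∈ ({i, j} : Finset (Fin (n+1))), q p ≤ ∑ j, q j :=
      Finset.sum_le_sum_of_subset_of_nonneg (Finset.subset_univ _) (fun p _ _ => hq0 p)
    rwa [Finset.sum_pair hij] at hsub
  have hSnonneg : 0 ≤ S := by
    rw [hS_def]
    exact Finset.sum_nonneg (fun j _ => hq0 j)
  have hsum_upd : ∀ (i : Fin (n+1)) (d : ℝ), (∑ j, Function.update q i d j) = S - q i + d := by
    intro i d
    rw [Finset.sum_update_of_mem (Finset.mem_univ i), Finset.sdiff_singleton_eq_erase,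
      Finset.sum_erase_eq_sub (Finset.mem_univ i), hS_def]
    ring
  have hdev : ∀ (i : Fin (n+1)), ∀ d ∈ Set.Icc (0:ℝ) 1,
      d / (S - q i + d) - (if i = Fin.last n then ck else cbar) d
        ≤ q i / S - (if i = Fin.last n then ck else cbar) (q i) := by
    intro i d hd
    have h := heq i d hd
    simp only [pmUtility, Function.update_self, hsum_upd, ← hS_def] at h
    exact h
  have hdevk : ∀ d ∈ Set.Icc (0:ℝ) 1,
      d / (S - q (Fin.last n) + d) - ck d ≤ q (Fin.last n) / S - ck (q (Fin.last n)) := by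
    intro d hd
    have h := hdev (Fin.last n) d hd
    rwa [if_pos rfl] at h
  have hdevb : ∀ (j : Fin (n+1)), j ≠ Fin.last n → ∀ d ∈ Set.Icc (0:ℝ) 1,
      d / (S - q j + d) - cbar d ≤ q j / S - cbar (q j) := by
    intro j hj d hd
    have h := hdev j d hd
    rwa [if_neg hj] at h
  -- Step 2 : total quality is positive
  have hSpos : 0 < S := by
    rcases lt_or_eq_of_le hSnonneg with h | h
    · exact h
    exfalso
    have hallz : ∀ i, q i = 0 := by
      intro i
      have h1 := hqS i
      have h2 := hq0 i
      linarith
    have hck_cont : Filter.Tendsto ck (nhdsWithin (0:ℝ) (Set.Ioi 0)) (nhds 0) := by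
      have h1 := (hdiffk.continuous.tendsto 0)
      rw [hk0] at h1
      exact h1.mono_left nhdsWithin_le_nhds
    have hev2 : ∀ᶠ d in nhdsWithin (0:ℝ) (Set.Ioi 0), ck d < 1 :=
      hck_cont.eventually_lt_const (by norm_num)
    have hmem2 : ∀ᶠ d in nhdsWithin (0:ℝ) (Set.Ioi 0), d ∈ Set.Ioc (0:ℝ) 1 :=
      Filter.eventually_of_mem (Ioc_mem_nhdsGT (by norm_num)) (fun x hx => hx)
    obtain ⟨d, hdlt, hdmem⟩ := (hev2.and hmem2).exists
    have hh := hdevk d ⟨hdmem.1.le, hdmem.2⟩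
    rw [hallz (Fin.last n), hk0, ← h] at hh
    have hdd : (0:ℝ) - 0 + d = d := by ring
    rw [hdd, div_self (ne_of_gt hdmem.1), zero_div] at hh
    linarith
  -- marginal-cost bounds from best responses
  have hP1b : ∀ (j : Fin (n+1)), j ≠ Fin.last n → 0 < q j → a ≤ 1 / S := by
    intro j hj hqj
    have h0 := hdevb j hj 0 ⟨le_rfl, zero_le_one⟩
    rw [hc0, zero_div, sub_zero] at h0
    have hcb : cbar (q j) ≤ q j / S := by linarith
    have hda : a ≤ cbar (q j) / q j :=
      pm_deriv_le_slope0 hconv hc0 (hdiffb 0) hqj (hq1 j)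
    have hmid : cbar (q j) / q j ≤ (q j / S) / q j := by gcongr
    have hlast : (q j / S) / q j = 1 / S := by
      rw [div_right_comm, div_self (ne_of_gt hqj)]
    linarith
  have hP1k : 0 < q (Fin.last n) → b ≤ 1 / S := by
    intro hqk
    have h0 := hdevk 0 ⟨le_rfl, zero_le_one⟩
    rw [hk0, zero_div, sub_zero] at h0
    have hcb : ck (q (Fin.last n)) ≤ q (Fin.last n) / S := by linarith
    have hda : b ≤ ck (q (Fin.last n)) / q (Fin.last n) :=
      pm_deriv_le_slope0 hkconv hk0 (hdiffk 0) hqk (hq1 _)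
    have hmid : ck (q (Fin.last n)) / q (Fin.last n)
        ≤ (q (Fin.last n) / S) / q (Fin.last n) := by gcongr
    have hlast : (q (Fin.last n) / S) / q (Fin.last n) = 1 / S := by
      rw [div_right_comm, div_self (ne_of_gt hqk)]
    linarith
  have hP2b : ∀ (j : Fin (n+1)), j ≠ Fin.last n → q j = 0 → 1 / S ≤ a := by
    intro j hj hqj
    apply pm_P2 hc0 (hdiffb 0) hSpos
    intro d hd
    have h := hdevb j hj d ⟨hd.1.le, hd.2⟩
    rw [hqj, sub_zero, zero_div, hc0, sub_zero] at h
    linarith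
  -- Step 3 : the entrant plays zero
  have hqk : q (Fin.last n) = 0 := by
    by_contra hqk'
    have hqkpos : 0 < q (Fin.last n) := lt_of_le_of_ne (hq0 _) (Ne.symm hqk')
    have hbS : b ≤ 1 / S := hP1k hqkpos
    have hSb : S * b ≤ 1 := by
      rw [le_div_iff₀ hSpos] at hbS
      linarith
    have hallpos : ∀ j : Fin n, 0 < q j.castSucc := by
      intro j
      rcases (hq0 j.castSucc).lt_or_eq with h | h
      · exact h
      · exfalso
        have h2a := hP2b j.castSucc (Fin.castSucc_lt_last j).ne h.symm
        linarith
    -- pick the incumbent with minimal quality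
    obtain ⟨i, -, hmin⟩ := Finset.exists_min_image Finset.univ
      (fun j : Fin n => q j.castSucc) ⟨⟨0, hn1⟩, Finset.mem_univ _⟩
    set qi := q i.castSucc with hqi_def
    have hqipos : 0 < qi := hallpos i
    have hsum_inc : (n:ℝ) * qi ≤ S := by
      have h2 : (Finset.univ : Finset (Fin n)).card • qi ≤ ∑ j : Fin n, q j.castSucc :=
        Finset.card_nsmul_le_sum Finset.univ _ qi (fun x _ => hmin x (Finset.mem_univ x))
      rw [Finset.card_univ, Fintype.card_fin, nsmul_eq_mul] at h2
      have h3 : ∑ j : Fin n, q j.castSucc ≤ S := by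
        have h4 := Fin.sum_univ_castSucc q
        rw [hS_def]
        have hql := hq0 (Fin.last n)
        linarith [h4]
      linarith
    set d := 2 * S / n with hd_def
    have hqi_lt_d : qi < d := by
      rw [hd_def, lt_div_iff₀ hnRpos]
      nlinarith [hsum_inc, hSpos]
    have hd_le_δ : d ≤ δ := by
      rw [hd_def, div_le_iff₀ hnRpos]
      have h2 : 2 / (b * δ) ≤ (n:ℝ) := hc2
      rw [div_le_iff₀ (by positivity)] at h2
      nlinarith [hSb, h2, hb0]
    have hdpos : 0 < d := lt_trans hqipos hqi_lt_d
    have hdIcc : d ∈ Set.Icc (0:ℝ) 1 := ⟨hdpos.le, by linarith⟩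
    set s := S - qi with hs_def
    have hspos : 0 < s := by
      have hp2 := hpairS i.castSucc (Fin.last n) (Fin.castSucc_lt_last i).ne
      rw [hs_def, hqi_def]
      linarith
    have hsd_pos : 0 < s + d := by linarith
    have hdev_i := hdevb i.castSucc (Fin.castSucc_lt_last i).ne d hdIcc
    rw [← hqi_def, ← hs_def] at hdev_i
    have hkey1 : s * (d - qi) ≤ (cbar d - cbar qi) * ((s + d) * S) := by
      have hne1 : s + d ≠ 0 := ne_of_gt hsd_pos
      have hne2 : S ≠ 0 := ne_of_gt hSpos
      have e : d / (s + d) - qi / S = s * (d - qi) / ((s + d) * S) := by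
        rw [hs_def]
        rw [hs_def] at hne1
        field_simp
        ring
      have h1 : s * (d - qi) / ((s + d) * S) ≤ cbar d - cbar qi := by
        rw [← e]; linarith [hdev_i]
      rw [div_le_iff₀ (by positivity)] at h1
      exact h1
    have hkey2 : cbar d - cbar qi ≤ L₀ * (d - qi) := by
      have hs4 := pm_slope_mono4 hconv hqipos.le hqi_lt_d hd_le_δ (by linarith) hδ2
      rw [show 2*δ - δ = δ by ring] at hs4
      have hdm : 0 < d - qi := sub_pos.mpr hqi_lt_d
      rw [div_le_div_iff₀ hdm hδ0] at hs4
      rw [hL0_def, div_mul_eq_mul_div, le_div_iff₀ hδ0]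
      linarith [hs4]
    have hmain : s ≤ L₀ * ((s + d) * S) := by
      nlinarith [hkey1, hkey2, sub_pos.mpr hqi_lt_d, mul_pos hsd_pos hSpos,
        mul_le_mul_of_nonneg_right hkey2 (mul_pos hsd_pos hSpos).le]
    have hns : ((n:ℝ) - 1) * S ≤ (n:ℝ) * s := by
      rw [hs_def]
      nlinarith [hsum_inc]
    have hnsd : (n:ℝ) * (s + d) ≤ ((n:ℝ) + 2) * S := by
      rw [hs_def, hd_def]
      have hcan : (n:ℝ) * (2 * S / n) = 2 * S := by field_simp
      nlinarith [hcan, mul_nonneg hnRpos.le hqipos.le]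
    have hfinal : b * ((n:ℝ) - 1) ≤ L₀ * ((n:ℝ) + 2) := by
      have h3 : (n:ℝ) * b * s ≤ (n:ℝ) * b * (L₀ * ((s + d) * S)) :=
        mul_le_mul_of_nonneg_left hmain (by positivity)
      have h4 : (n:ℝ) * b * (L₀ * ((s + d) * S)) = (S * b) * (L₀ * ((n:ℝ) * (s + d))) := by
        ring
      have h5 : (S * b) * (L₀ * ((n:ℝ) * (s + d))) ≤ 1 * (L₀ * (((n:ℝ) + 2) * S)) := by
        apply mul_le_mul hSb
        · exact mul_le_mul_of_nonneg_left hnsd hL0pos.le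
        · positivity
        · norm_num
      have h6 : b * (((n:ℝ) - 1) * S) ≤ (n:ℝ) * b * s := by nlinarith [hns, hb0]
      have h7 : b * (((n:ℝ) - 1) * S) ≤ 1 * (L₀ * (((n:ℝ) + 2) * S)) := by
        rw [← h4] at h5
        linarith
      have h8 : (b * ((n:ℝ) - 1)) * S ≤ (L₀ * ((n:ℝ) + 2)) * S := by
        nlinarith [h7]
      exact le_of_mul_le_mul_right h8 hSpos
    nlinarith [hfinal, hnb]
  refine ⟨hqk, ?_⟩
  -- Step 4 : all incumbents contribute
  intro j
  by_contra hj
  have hj0 : q j.castSucc = 0 := le_antisymm (not_lt.mp hj) (hq0 _)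
  have hSa : 1 / S ≤ a := hP2b j.castSucc (Fin.castSucc_lt_last j).ne hj0
  obtain ⟨p, hp⟩ : ∃ p, 0 < q p := by
    by_contra hnone
    push_neg at hnone
    have hsn : S ≤ 0 := by
      rw [hS_def]
      exact Finset.sum_nonpos (fun x _ => hnone x)
    linarith
  have hpne : p ≠ Fin.last n := by
    intro hpe
    rw [hpe, hqk] at hp
    exact lt_irrefl 0 hp
  set qp := q p with hqp_def
  have hdev0 := hdevb p hpne 0 ⟨le_rfl, zero_le_one⟩
  rw [hc0, zero_div, sub_zero] at hdev0
  have hcb1 : cbar qp ≤ qp / S := by rw [hqp_def]; linarith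
  have hda1 : a ≤ cbar qp / qp := pm_deriv_le_slope0 hconv hc0 (hdiffb 0) hp (hq1 p)
  have haS : a ≤ 1 / S := by
    have hmid : cbar qp / qp ≤ (qp / S) / qp := by gcongr
    have hlast2 : (qp / S) / qp = 1 / S := by
      rw [div_right_comm, div_self (ne_of_gt hp)]
    linarith
  have hSa_eq : 1 / S = a := le_antisymm hSa haS
  have hcqp : cbar qp = a * qp := by
    have h1 : a * qp ≤ cbar qp := by
      rw [le_div_iff₀ hp] at hda1
      linarith
    have h2 : qp / S = a * qp := by
      rw [← hSa_eq]; ring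
    linarith
  set t := qp / 2 with ht_def
  have htpos : 0 < t := by positivity
  have htlt : t < qp := by rw [ht_def]; linarith
  have ht1 : t ≤ 1 := by
    have := hq1 p
    rw [← hqp_def] at this
    linarith
  have hlin_t : cbar t = a * t := by
    have hge : a * t ≤ cbar t := by
      have h1 := pm_deriv_le_slope0 hconv hc0 (hdiffb 0) htpos ht1
      rw [le_div_iff₀ htpos] at h1
      linarith
    have hle : cbar t / t ≤ cbar qp / qp := by
      have h2 := hconv.secant_mono (Set.mem_Icc.mpr ⟨le_rfl, zero_le_one⟩)
        (Set.mem_Icc.mpr ⟨htpos.le, ht1⟩)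
        (Set.mem_Icc.mpr ⟨hp.le, by rw [hqp_def]; exact hq1 p⟩)
        (ne_of_gt htpos) (ne_of_gt hp) htlt.le
      simpa [hc0] using h2
    have hle' : cbar t * qp ≤ cbar qp * t := by
      rw [div_le_div_iff₀ htpos hp] at hle
      linarith
    have h5 : cbar t ≤ a * t := by nlinarith [hle', hcqp, hp, htpos]
    linarith
  have hdevt := hdevb p hpne t ⟨htpos.le, ht1⟩
  rw [← hqp_def, hlin_t, hcqp] at hdevt
  have hden : 0 < S - qp + t := by
    have hq5 := hqS p
    rw [← hqp_def] at hq5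
    linarith
  have hfrac : t / (S - qp + t) ≤ t / S := by
    have haq : qp / S = a * qp := by rw [← hSa_eq]; ring
    have hat : t / S = a * t := by rw [← hSa_eq]; ring
    rw [hat]
    linarith [hdevt, haq]
  rw [div_le_div_iff₀ hden hSpos] at hfrac
  nlinarith [hfrac, htpos, hp, ht_def, mul_pos hp hp]
end

section
/- Mean-improving transfer lemma: let φ : [0, 1] → ℝ be positive and decreasing, and let 0 ≤ j < i ≤ n−1. Then ∫_0^1 φ(y)·[C(n-1,i)·y^{n-1-i}(1-y)^i − C(n-1,j)·y^{n-1-j}(1-y)^j] dy ≥ 0. -/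
open intervalIntegral MeasureTheory Set

lemma beta_nat_aux (q p : ℕ) :
    ∫ y in (0:ℝ)..1, y ^ p * (1 - y) ^ q
      = (p.factorial * q.factorial : ℝ) / (p + q + 1).factorial := by
  induction q generalizing p with
  | zero =>
    simp only [pow_zero, mul_one, integral_pow, one_pow, Nat.factorial_zero, Nat.cast_one,
      add_zero, Nat.factorial_succ]
    push_cast
    rw [zero_pow (by positivity)]
    field_simp
    norm_num
  | succ q ih =>
    have hu : ∀ x ∈ Set.uIcc (0:ℝ) 1, HasDerivAt (fun y : ℝ => (1 - y) ^ (q + 1))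
        (-((q + 1 : ℝ) * (1 - x) ^ q)) x := by
      intro x _
      have h := (((hasDerivAt_id x).const_sub 1).pow (q + 1))
      simp only [id] at h
      refine h.congr_deriv ?_
      rw [Nat.add_sub_cancel]; push_cast; ring
    have hv : ∀ x ∈ Set.uIcc (0:ℝ) 1, HasDerivAt (fun y : ℝ => y ^ (p + 1) / (p + 1))
        (x ^ p) x := by
      intro x _
      have h := (hasDerivAt_pow (p + 1) x).div_const (p + 1)
      refine h.congr_deriv ?_
      rw [Nat.add_sub_cancel]; push_cast; field_simp
    have hIu : IntervalIntegrable (fun x : ℝ => -((q + 1 : ℝ) * (1 - x) ^ q)) MeasureTheory.volume 0 1 :=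
      (Continuous.intervalIntegrable (by continuity) 0 1)
    have hIv : IntervalIntegrable (fun x : ℝ => x ^ p) MeasureTheory.volume 0 1 :=
      (Continuous.intervalIntegrable (by continuity) 0 1)
    have parts := intervalIntegral.integral_mul_deriv_eq_deriv_mul hu hv hIu hIv
    have e : ∫ y in (0:ℝ)..1, y ^ p * (1 - y) ^ (q + 1)
        = ∫ y in (0:ℝ)..1, (1 - y) ^ (q + 1) * y ^ p := by
      congr 1; ext y; ring
    rw [e, parts]
    simp only [sub_self, zero_pow (Nat.succ_ne_zero q), one_pow, zero_mul, sub_zero,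
      zero_pow (Nat.succ_ne_zero p), zero_div, mul_zero, zero_sub, zero_mul]
    have e2 : ∫ y in (0:ℝ)..1, -((q + 1 : ℝ) * (1 - y) ^ q) * (y ^ (p + 1) / (p + 1))
        = -((q + 1 : ℝ) / (p + 1)) * ∫ y in (0:ℝ)..1, y ^ (p + 1) * (1 - y) ^ q := by
      rw [← intervalIntegral.integral_const_mul]
      congr 1; ext y; ring
    rw [e2, ih (p + 1)]
    have h1 : ((p + 1) + q + 1) = (p + (q + 1) + 1) := by omega
    rw [h1, Nat.factorial_succ p, Nat.factorial_succ q]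
    push_cast
    have : ((p + (q + 1) + 1).factorial : ℝ) ≠ 0 := by positivity
    field_simp

lemma bern_int (m k : ℕ) (hk : k ≤ m) :
    ∫ y in (0:ℝ)..1, (m.choose k : ℝ) * y ^ (m - k) * (1 - y) ^ k = 1 / (m + 1) := by
  have e : ∫ y in (0:ℝ)..1, (m.choose k : ℝ) * y ^ (m - k) * (1 - y) ^ k
      = (m.choose k : ℝ) * ∫ y in (0:ℝ)..1, y ^ (m - k) * (1 - y) ^ k := by
    rw [← intervalIntegral.integral_const_mul]; congr 1; ext y; ring
  rw [e, beta_nat_aux k (m - k)]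
  have h1 : m - k + k + 1 = m + 1 := by omega
  rw [h1]
  have hc : (m.choose k) * ((m - k).factorial * k.factorial) = m.factorial := by
    rw [← Nat.choose_mul_factorial_mul_factorial hk]; ring
  have hcast : ((m.choose k : ℝ)) * ((m - k).factorial * k.factorial) = m.factorial := by
    exact_mod_cast congrArg (Nat.cast : ℕ → ℝ) hc
  rw [Nat.factorial_succ m]
  push_cast
  have h2 : (m.factorial : ℝ) ≠ 0 := by positivity
  field_simp
  nlinarith [hcast]

/-- Mean-improving transfer lemma: if `φ : [0,1] → ℝ` is positive and decreasing and
`0 ≤ j < i ≤ n−1`, then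
`∫₀¹ φ(y)·[C(n-1,i)y^{n-1-i}(1-y)^i − C(n-1,j)y^{n-1-j}(1-y)^j] dy ≥ 0`. -/
theorem mean_improving_transfer (n i j : ℕ) (hj : j < i) (hi : i ≤ n - 1) (hn : 2 ≤ n)
    (φ : ℝ → ℝ)
    (hpos : ∀ y ∈ Set.Icc (0:ℝ) 1, 0 < φ y)
    (hanti : AntitoneOn φ (Set.Icc (0:ℝ) 1)) :
    0 ≤ ∫ y in (0:ℝ)..1,
        φ y * ((Nat.choose (n-1) i : ℝ) * y ^ (n-1-i) * (1-y) ^ i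
          - (Nat.choose (n-1) j : ℝ) * y ^ (n-1-j) * (1-y) ^ j) := by
  set m := n - 1 with hm
  set k := i - j with hk
  have hkpos : 0 < k := by omega
  have hjm : j ≤ m := by omega
  set D : ℝ → ℝ := fun y => (Nat.choose m i : ℝ) * y ^ (m-i) * (1-y) ^ i
      - (Nat.choose m j : ℝ) * y ^ (m-j) * (1-y) ^ j with hD
  have hDcont : Continuous D := by unfold D; fun_prop
  -- the crossing point
  have hCi : (0:ℝ) < (Nat.choose m i : ℝ) := by
    exact_mod_cast Nat.choose_pos hi
  have hCj : (0:ℝ) < (Nat.choose m j : ℝ) := by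
    exact_mod_cast Nat.choose_pos hjm
  set a : ℝ := (Nat.choose m i : ℝ) ^ ((1:ℝ)/k) with ha
  set b : ℝ := (Nat.choose m j : ℝ) ^ ((1:ℝ)/k) with hb
  have hapos : 0 < a := Real.rpow_pos_of_pos hCi _
  have hbpos : 0 < b := Real.rpow_pos_of_pos hCj _
  have hak : a ^ k = (Nat.choose m i : ℝ) := by
    rw [ha, ← Real.rpow_natCast (_ ^ _) k, ← Real.rpow_mul hCi.le]
    rw [one_div, inv_mul_cancel₀ (by exact_mod_cast hkpos.ne' : (k:ℝ) ≠ 0), Real.rpow_one]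
  have hbk : b ^ k = (Nat.choose m j : ℝ) := by
    rw [hb, ← Real.rpow_natCast (_ ^ _) k, ← Real.rpow_mul hCj.le]
    rw [one_div, inv_mul_cancel₀ (by exact_mod_cast hkpos.ne' : (k:ℝ) ≠ 0), Real.rpow_one]
  set y0 : ℝ := a / (a + b) with hy0
  have hab : 0 < a + b := by linarith
  have hy0mem : y0 ∈ Set.Icc (0:ℝ) 1 := by
    constructor
    · positivity
    · rw [hy0, div_le_one hab]; linarith
  -- factorization of D
  have hfact : ∀ y : ℝ, D y = y ^ (m-i) * (1-y) ^ j * ((a*(1-y)) ^ k - (b*y) ^ k) := by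
    intro y
    have e1 : m - j = (m - i) + k := by omega
    have e2 : i = j + k := by omega
    rw [hD]
    simp only
    have p1 : (1-y) ^ i = (1-y) ^ j * (1-y) ^ k := by
      rw [← pow_add, show j + k = i by omega]
    have p2 : y ^ (m-j) = y ^ (m-i) * y ^ k := by
      rw [← pow_add, show m - i + k = m - j by omega]
    rw [p1, p2, ← hak, ← hbk, mul_pow, mul_pow]
    ring
  -- sign of D
  have hDpos : ∀ y ∈ Set.Icc (0:ℝ) y0, 0 ≤ D y := by
    intro y hy
    have hy1 : y ≤ 1 := le_trans hy.2 hy0mem.2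
    rw [hfact]
    apply mul_nonneg (mul_nonneg (pow_nonneg hy.1 _) (pow_nonneg (by linarith) _))
    rw [sub_nonneg]
    apply pow_le_pow_left₀ (mul_nonneg hbpos.le hy.1)
    have : y * (a + b) ≤ a := by
      have := hy.2
      rw [hy0, le_div_iff₀ hab] at this
      linarith
    nlinarith
  have hDneg : ∀ y ∈ Set.Icc y0 (1:ℝ), D y ≤ 0 := by
    intro y hy
    have hy0' : 0 ≤ y := le_trans hy0mem.1 hy.1
    rw [hfact]
    apply mul_nonpos_of_nonneg_of_nonpos
      (mul_nonneg (pow_nonneg hy0' _) (pow_nonneg (by linarith [hy.2]) _))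
    rw [sub_nonpos]
    apply pow_le_pow_left₀ (mul_nonneg hapos.le (by linarith [hy.2]))
    have : a ≤ y * (a + b) := by
      have := hy.1
      rw [hy0, div_le_iff₀ hab] at this
      linarith
    nlinarith
  -- integrability
  have hφint : ∀ c d : ℝ, Set.uIcc c d ⊆ Set.Icc (0:ℝ) 1 →
      IntervalIntegrable (fun y => φ y * D y) MeasureTheory.volume c d := by
    intro c d hcd
    exact ((hanti.mono hcd).intervalIntegrable).mul_continuousOn hDcont.continuousOn
  have hsub1 : Set.uIcc (0:ℝ) y0 ⊆ Set.Icc (0:ℝ) 1 := by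
    rw [Set.uIcc_of_le hy0mem.1]
    exact Set.Icc_subset_Icc le_rfl hy0mem.2
  have hsub2 : Set.uIcc y0 (1:ℝ) ⊆ Set.Icc (0:ℝ) 1 := by
    rw [Set.uIcc_of_le hy0mem.2]
    exact Set.Icc_subset_Icc hy0mem.1 le_rfl
  have hI1 := hφint 0 y0 hsub1
  have hI2 := hφint y0 1 hsub2
  have hcI1 : IntervalIntegrable (fun y => φ y0 * D y) MeasureTheory.volume 0 y0 :=
    ((continuous_const.mul hDcont).intervalIntegrable _ _)
  have hcI2 : IntervalIntegrable (fun y => φ y0 * D y) MeasureTheory.volume y0 1 :=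
    ((continuous_const.mul hDcont).intervalIntegrable _ _)
  -- pointwise bounds
  have hb1 : ∀ y ∈ Set.Icc (0:ℝ) y0, φ y0 * D y ≤ φ y * D y := by
    intro y hy
    have hymem : y ∈ Set.Icc (0:ℝ) 1 := ⟨hy.1, le_trans hy.2 hy0mem.2⟩
    exact mul_le_mul_of_nonneg_right (hanti hymem hy0mem hy.2) (hDpos y hy)
  have hb2 : ∀ y ∈ Set.Icc y0 (1:ℝ), φ y0 * D y ≤ φ y * D y := by
    intro y hy
    have hymem : y ∈ Set.Icc (0:ℝ) 1 := ⟨le_trans hy0mem.1 hy.1, hy.2⟩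
    exact mul_le_mul_of_nonpos_right (hanti hy0mem hymem hy.1) (hDneg y hy)
  -- integral of D over [0,1] is zero
  have hDint : ∫ y in (0:ℝ)..1, D y = 0 := by
    have h1 := bern_int m i hi
    have h2 := bern_int m j hjm
    rw [hD]
    rw [intervalIntegral.integral_sub
      ((Continuous.intervalIntegrable (by fun_prop) 0 1))
      ((Continuous.intervalIntegrable (by fun_prop) 0 1))]
    rw [h1, h2, sub_self]
  have key1 : ∫ y in (0:ℝ)..y0, φ y0 * D y ≤ ∫ y in (0:ℝ)..y0, φ y * D y :=
    intervalIntegral.integral_mono_on hy0mem.1 hcI1 hI1 hb1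
  have key2 : ∫ y in y0..(1:ℝ), φ y0 * D y ≤ ∫ y in y0..(1:ℝ), φ y * D y :=
    intervalIntegral.integral_mono_on hy0mem.2 hcI2 hI2 hb2
  have hsplit : ∫ y in (0:ℝ)..1, φ y * D y
      = (∫ y in (0:ℝ)..y0, φ y * D y) + ∫ y in y0..(1:ℝ), φ y * D y :=
    (intervalIntegral.integral_add_adjacent_intervals hI1 hI2).symm
  have hcsplit : (∫ y in (0:ℝ)..y0, φ y0 * D y) + (∫ y in y0..(1:ℝ), φ y0 * D y)
      = ∫ y in (0:ℝ)..1, φ y0 * D y :=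
    intervalIntegral.integral_add_adjacent_intervals hcI1 hcI2
  have hczero : ∫ y in (0:ℝ)..1, φ y0 * D y = 0 := by
    rw [intervalIntegral.integral_const_mul, hDint, mul_zero]
  have : 0 ≤ ∫ y in (0:ℝ)..1, φ y * D y := by
    rw [hsplit]
    calc (0:ℝ) = (∫ y in (0:ℝ)..y0, φ y0 * D y) + ∫ y in y0..(1:ℝ), φ y0 * D y := by
          rw [hcsplit, hczero]
      _ ≤ _ := add_le_add key1 key2
  exact this
end
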